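/- arXiv:1205.0037 — 6 statements merged into one kernel-verified Lean document; each statement's English description precedes it below -/
import Mathlib

section
/- Let r be a positive integer and let s_1, ..., s_r be complex numbers with respective real parts σ_1, ..., σ_r. If for each integer k with 1 ≤ k ≤ r the inequality σ_1 + σ_2 + ... + σ_k > k holds, then the multiple zeta series ζ(s_1, ..., s_r) = ∑_{n_1 > n_2 > ... > n_r > 0} ∏_{j=1}^r n_j^{-s_j} (sum over r-tuples of positive integers with n_1 > n_2 > ... > n_r) is absolutely convergent. -/
open Finset Real

/-- Abel-summation style bound: if `N` is antitone and `≥ b ≥ 1` on `[0, r)` and all partial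
sums of `τ` are nonnegative, then `b ^ (∑ τ) ≤ ∏ N j ^ τ j`. -/
lemma mzv_aux_pow (r : ℕ) (N τ : ℕ → ℝ)
    (hmono : ∀ i j, i ≤ j → j < r → N j ≤ N i)
    (hT : ∀ k, k ≤ r → 0 ≤ ∑ j ∈ Finset.range k, τ j) :
    ∀ b : ℝ, 1 ≤ b → (∀ j, j < r → b ≤ N j) →
      b ^ (∑ j ∈ Finset.range r, τ j) ≤ ∏ j ∈ Finset.range r, N j ^ τ j := by
  induction r with
  | zero => intro b hb _; simp
  | succ r ih =>
    intro b hb hbN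
    have hNr1 : (1 : ℝ) ≤ N r := le_trans hb (hbN r (Nat.lt_succ_self r))
    have hNr0 : (0 : ℝ) < N r := lt_of_lt_of_le one_pos hNr1
    have h1 : (N r) ^ (∑ j ∈ Finset.range r, τ j) ≤ ∏ j ∈ Finset.range r, N j ^ τ j := by
      apply ih (fun i j hij hj => hmono i j hij (hj.trans (Nat.lt_succ_self r)))
        (fun k hk => hT k (hk.trans (Nat.le_succ r))) (N r) hNr1
      intro j hj
      exact hmono j r (Nat.le_of_lt hj) (Nat.lt_succ_self r)
    rw [Finset.prod_range_succ, Finset.sum_range_succ]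
    calc b ^ (∑ j ∈ Finset.range r, τ j + τ r)
        ≤ (N r) ^ (∑ j ∈ Finset.range r, τ j + τ r) := by
          apply Real.rpow_le_rpow (le_trans zero_le_one hb) (hbN r (Nat.lt_succ_self r))
          have := hT (r + 1) le_rfl
          rwa [Finset.sum_range_succ] at this
      _ = (N r) ^ (∑ j ∈ Finset.range r, τ j) * (N r) ^ τ r := Real.rpow_add hNr0 _ _
      _ ≤ (∏ j ∈ Finset.range r, N j ^ τ j) * (N r) ^ τ r :=
          mul_le_mul_of_nonneg_right h1 (Real.rpow_nonneg hNr0.le _)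

/-- Summability of a product of `rpow`s over a pi type. -/
lemma mzv_aux_summable (r : ℕ) (c : ℝ) (hc : c < -1) :
    Summable (fun n : Fin r → ℕ => ∏ j, (n j : ℝ) ^ c) := by
  induction r with
  | zero => exact Summable.of_finite
  | succ r ih =>
    have hbase : Summable (fun n : ℕ => (n : ℝ) ^ c) := Real.summable_nat_rpow.mpr hc
    have hprod : Summable (fun p : ℕ × (Fin r → ℕ) =>
        ((p.1 : ℝ) ^ c) * ∏ j, (p.2 j : ℝ) ^ c) :=
      Summable.mul_of_nonneg (f := fun n : ℕ => (n : ℝ) ^ c)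
        (g := fun n : Fin r → ℕ => ∏ j, (n j : ℝ) ^ c) hbase ih
        (fun n => Real.rpow_nonneg (Nat.cast_nonneg n) c)
        (fun n => Finset.prod_nonneg fun j _ => Real.rpow_nonneg (Nat.cast_nonneg _) c)
    refine (Equiv.summable_iff
      (⟨fun p => Fin.cons p.1 p.2, fun n => (n 0, fun j => n j.succ),
        fun p => by simp, fun n => funext fun j => Fin.cases rfl (fun i => rfl) j⟩ :
        ℕ × (Fin r → ℕ) ≃ (Fin (r + 1) → ℕ))
      (f := fun n : Fin (r + 1) → ℕ => ∏ j, ((n j : ℝ)) ^ c)).mp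
      (hprod.congr fun p => ?_)
    simp [Fin.prod_univ_succ]

/-- **Absolute convergence criterion for multiple zeta series.**
If `r ≥ 1` and `s_1, …, s_r` are complex numbers whose real parts satisfy
`σ_1 + ⋯ + σ_k > k` for each `1 ≤ k ≤ r`, then the multiple zeta series
`ζ(s_1, …, s_r) = ∑_{n_1 > ⋯ > n_r > 0} ∏_j n_j^{-s_j}` is absolutely convergent. -/
theorem mzv_absolutely_convergent (r : ℕ) (hr : 0 < r) (s : Fin r → ℂ)
    (h : ∀ k : ℕ, 1 ≤ k → k ≤ r →
      (k : ℝ) < ∑ j ∈ Finset.univ.filter (fun j : Fin r => (j : ℕ) < k), (s j).re) :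
    Summable (fun n : {n : Fin r → ℕ // (∀ j, 0 < n j) ∧ ∀ i j : Fin r, i < j → n j < n i} =>
      ‖∏ j, (n.1 j : ℂ) ^ (-(s j))‖) := by
  -- notation for partial sums of real parts
  set S : ℕ → ℝ := fun k => ∑ j ∈ Finset.univ.filter (fun j : Fin r => (j : ℕ) < k), (s j).re
    with hS
  -- choose a uniform ε > 0 with S k ≥ k (1 + ε) for 1 ≤ k ≤ r
  obtain ⟨ε, hε, hεk⟩ : ∃ ε : ℝ, 0 < ε ∧ ∀ k, 1 ≤ k → k ≤ r → (k : ℝ) * (1 + ε) ≤ S k := by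
    have hne : (Finset.Icc 1 r).Nonempty := ⟨1, Finset.mem_Icc.mpr ⟨le_rfl, hr⟩⟩
    refine ⟨(Finset.Icc 1 r).inf' hne (fun k => (S k - k) / k), ?_, ?_⟩
    · rw [Finset.lt_inf'_iff]
      intro k hk
      rw [Finset.mem_Icc] at hk
      have hk0 : (0 : ℝ) < k := by exact_mod_cast hk.1
      exact div_pos (by linarith [h k hk.1 hk.2]) hk0
    · intro k h1k hkr
      have hk0 : (0 : ℝ) < k := by exact_mod_cast h1k
      have hle := Finset.inf'_le (fun k : ℕ => ((S k - k) / k : ℝ))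
        (Finset.mem_Icc.mpr ⟨h1k, hkr⟩)
      have : (k : ℝ) * ((S k - k) / k) = S k - k := by field_simp
      nlinarith [mul_le_mul_of_nonneg_left hle hk0.le]
  -- the dominating summable function
  have hsum : Summable (fun n : {n : Fin r → ℕ // (∀ j, 0 < n j) ∧
      ∀ i j : Fin r, i < j → n j < n i} => ∏ j, (n.1 j : ℝ) ^ (-(1 + ε))) := by
    have := (mzv_aux_summable r (-(1 + ε)) (by linarith)).subtype
      {n : Fin r → ℕ | (∀ j, 0 < n j) ∧ ∀ i j : Fin r, i < j → n j < n i}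
    exact this.congr fun n => rfl
  refine Summable.of_nonneg_of_le (fun n => norm_nonneg _) (fun n => ?_) hsum
  obtain ⟨n, hpos, hdec⟩ := n
  -- rewrite the norm as a real product
  have hnorm : ‖∏ j, (n j : ℂ) ^ (-(s j))‖ = ∏ j, (n j : ℝ) ^ (-(s j).re) := by
    rw [norm_prod]
    refine Finset.prod_congr rfl fun j _ => ?_
    have hj : (0 : ℝ) < (n j : ℝ) := by exact_mod_cast hpos j
    rw [show ((n j : ℂ)) = ((n j : ℝ) : ℂ) by push_cast; ring,
      Complex.norm_cpow_eq_rpow_re_of_pos hj, Complex.neg_re]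
  rw [hnorm]
  -- auxiliary sequences on ℕ
  set N : ℕ → ℝ := fun j => if hj : j < r then (n ⟨j, hj⟩ : ℝ) else 1 with hN
  set τ : ℕ → ℝ := fun j => if hj : j < r then (s ⟨j, hj⟩).re - (1 + ε) else 0 with hτ
  have hN1 : ∀ j, 1 ≤ N j := by
    intro j
    by_cases hj : j < r
    · simp only [hN, dif_pos hj]
      exact_mod_cast hpos ⟨j, hj⟩
    · simp [hN, dif_neg hj]
  have hNmono : ∀ i j, i ≤ j → j < r → N j ≤ N i := by
    intro i j hij hj
    have hi : i < r := lt_of_le_of_lt hij hj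
    simp only [hN, dif_pos hj, dif_pos hi]
    rcases eq_or_lt_of_le hij with rfl | hlt
    · exact le_rfl
    · exact_mod_cast le_of_lt (hdec ⟨i, hi⟩ ⟨j, hj⟩ (by exact_mod_cast hlt))
  -- partial sums of τ are nonnegative
  have hτsum : ∀ k, k ≤ r → ∑ j ∈ Finset.range k, τ j = S k - k * (1 + ε) := by
    intro k hk
    have h1 : ∑ j ∈ Finset.range k, τ j
        = ∑ j ∈ Finset.range k, ((if hj : j < r then (s ⟨j, hj⟩).re else 0) - (1 + ε)) := by
      refine Finset.sum_congr rfl fun j hj => ?_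
      have : j < r := lt_of_lt_of_le (Finset.mem_range.mp hj) hk
      simp [hτ, dif_pos this]
    have h2 : S k = ∑ j ∈ Finset.range k, (if hj : j < r then (s ⟨j, hj⟩).re else 0) := by
      simp only [hS]
      rw [Finset.sum_filter]
      have e1 : ∑ j : Fin r, (if (j : ℕ) < k then (s j).re else 0)
          = ∑ j ∈ Finset.range r, (fun j => if hj : j < r then
              (if j < k then (s ⟨j, hj⟩).re else 0) else 0) j := by
        rw [← Fin.sum_univ_eq_sum_range]
        exact Finset.sum_congr rfl fun j _ => by simp [j.isLt]
      rw [e1]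
      rw [← Finset.sum_subset (Finset.range_subset_range.mpr hk) (fun j _ hj => by
        have hjk : ¬ j < k := fun hc => hj (Finset.mem_range.mpr hc)
        simp [hjk])]
      refine Finset.sum_congr rfl fun j hj => ?_
      have hjk := Finset.mem_range.mp hj
      have hjr : j < r := lt_of_lt_of_le hjk hk
      simp [hjr, hjk]
    rw [h1, Finset.sum_sub_distrib, ← h2]
    simp only [Finset.sum_const, Finset.card_range, nsmul_eq_mul]
  have hT : ∀ k, k ≤ r → 0 ≤ ∑ j ∈ Finset.range k, τ j := by
    intro k hk
    rw [hτsum k hk]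
    rcases Nat.eq_zero_or_pos k with rfl | hk1
    · simp [hS]
    · have := hεk k hk1 hk
      linarith
  -- key pointwise bound
  have hkey : (1 : ℝ) ≤ ∏ j, (n j : ℝ) ^ ((s j).re - (1 + ε)) := by
    have := mzv_aux_pow r N τ hNmono hT 1 le_rfl (fun j hj => hN1 j)
    rw [Real.one_rpow] at this
    refine this.trans_eq ?_
    rw [← Fin.prod_univ_eq_prod_range (fun j => N j ^ τ j) r]
    refine Finset.prod_congr rfl fun j _ => ?_
    simp [hN, hτ, j.isLt]
  -- conclude
  have hpos' : ∀ j : Fin r, (0 : ℝ) < (n j : ℝ) := fun j => by exact_mod_cast hpos j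
  show ∏ j, (n j : ℝ) ^ (-(s j).re) ≤ ∏ j, (n j : ℝ) ^ (-(1 + ε))
  calc ∏ j, (n j : ℝ) ^ (-(s j).re)
      ≤ (∏ j, (n j : ℝ) ^ (-(s j).re)) * ∏ j, (n j : ℝ) ^ ((s j).re - (1 + ε)) :=
        le_mul_of_one_le_right (Finset.prod_nonneg fun j _ =>
          Real.rpow_nonneg (hpos' j).le _) hkey
    _ = ∏ j, (n j : ℝ) ^ (-(1 + ε)) := by
        rw [← Finset.prod_mul_distrib]
        refine Finset.prod_congr rfl fun j _ => ?_
        rw [← Real.rpow_add (hpos' j)]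
        ring_nf
end

section
/- Let r be a positive integer, and let s_1, ..., s_r be complex numbers arranged so that their respective real parts σ_1, ..., σ_r satisfy σ_j ≤ σ_{j+1} for 1 ≤ j ≤ r−1. Let s be a complex number with real part σ. If for each integer k with 1 ≤ k ≤ r the inequality σ + σ_1 + ... + σ_k > k holds, then the Mordell–Tornheim series T(s_1, ..., s_r; s) = ∑_{m_1=1}^∞ ⋯ ∑_{m_r=1}^∞ 1/(m_1^{s_1} ⋯ m_r^{s_r} (m_1 + ⋯ + m_r)^s) is absolutely convergent. -/
set_option maxHeartbeats 1000000

open Finset Real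

/-- A down-closed subset of `Fin r` is an initial segment. -/
lemma lowerset_eq_init {r : ℕ} (A : Finset (Fin r))
    (hA : ∀ i j : Fin r, i ≤ j → j ∈ A → i ∈ A) :
    A = Finset.univ.filter (fun j : Fin r => (j : ℕ) < A.card) := by
  ext j
  simp only [mem_filter, mem_univ, true_and]
  constructor
  · intro hj
    have hsub : Finset.Iic j ⊆ A := fun i hi => hA i j (mem_Iic.mp hi) hj
    have := Finset.card_le_card hsub
    rw [Fin.card_Iic] at this
    omega
  · intro hj
    by_contra hjA
    have hsub : A ⊆ Finset.Iio j := by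
      intro i hi
      rw [mem_Iio]
      by_contra hij
      exact hjA (hA j i (not_lt.mp hij) hi)
    have := Finset.card_le_card hsub
    rw [Fin.card_Iio] at this
    omega

/-- p-series over positive naturals. -/
lemma summable_pnat_rpow {a : ℝ} (ha : 1 < a) :
    Summable (fun n : ℕ+ => ((n : ℕ) : ℝ) ^ (-a)) := by
  have : Summable (fun n : ℕ => (n : ℝ) ^ (-a)) :=
    Real.summable_nat_rpow.mpr (by linarith)
  exact this.comp_injective (fun x y hxy => PNat.coe_injective hxy)

/-- Summability of the product p-series over `Fin n → ℕ+`. -/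
lemma summable_pi_pnat_rpow : ∀ (n : ℕ) {a : ℝ}, 1 < a →
    Summable (fun m : Fin n → ℕ+ => ∏ j, (((m j) : ℕ) : ℝ) ^ (-a)) := by
  intro n
  induction n with
  | zero => intro a ha; exact .of_finite
  | succ n ih =>
    intro a ha
    have H : Summable (fun p : ℕ+ × (Fin n → ℕ+) =>
        (((p.1 : ℕ) : ℝ) ^ (-a)) * ∏ j, (((p.2 j) : ℕ) : ℝ) ^ (-a)) :=
      by
        apply Summable.mul_of_nonneg (summable_pnat_rpow ha) (ih ha)
        · intro x
          exact Real.rpow_nonneg (Nat.cast_nonneg _) _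
        · intro x
          exact Finset.prod_nonneg fun j _ => Real.rpow_nonneg (Nat.cast_nonneg _) _
    refine ((Fin.consEquiv (fun _ : Fin (n+1) => ℕ+)).summable_iff).mp (H.congr fun p => ?_)
    simp only [Function.comp_apply, Fin.consEquiv_apply, Fin.prod_univ_succ,
      Fin.cons_zero, Fin.cons_succ]

/-- The equivalence between positive tuples and tuples of positive naturals. -/
def posTupleEquiv (r : ℕ) : {m : Fin r → ℕ // ∀ j, 0 < m j} ≃ (Fin r → ℕ+) where
  toFun m j := ⟨m.1 j, m.2 j⟩
  invFun m := ⟨fun j => (m j : ℕ), fun j => (m j).2⟩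
  left_inv m := rfl
  right_inv m := rfl

/-- The key real inequality: under the Mordell–Tornheim convergence condition, the
general term is dominated by a constant multiple of a product p-series term. -/
lemma mt_key_bound (r : ℕ) (hr : 0 < r) (σ' : Fin r → ℝ) (σ : ℝ)
    (hmono : ∀ i j : Fin r, i ≤ j → σ' i ≤ σ' j)
    (h : ∀ k : ℕ, 1 ≤ k → k ≤ r →
      (k : ℝ) < σ + ∑ j ∈ Finset.univ.filter (fun j : Fin r => (j : ℕ) < k), σ' j) :
    ∃ a : ℝ, 1 < a ∧ ∃ C : ℝ, 0 < C ∧ ∀ m : Fin r → ℕ, (∀ j, 0 < m j) →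
      (∏ j, (m j : ℝ) ^ (-(σ' j))) * ((∑ j, m j : ℕ) : ℝ) ^ (-σ)
        ≤ C * ∏ j, (m j : ℝ) ^ (-a) := by
  set j0 : Fin r := ⟨0, hr⟩ with hj0
  have hfilter1 : Finset.univ.filter (fun j : Fin r => (j : ℕ) < 1) = {j0} := by
    ext j
    simp only [mem_filter, mem_univ, true_and, mem_singleton, Nat.lt_one_iff, Fin.ext_iff, hj0]
  have h1 : 1 < σ + σ' j0 := by
    have := h 1 le_rfl hr
    rwa [hfilter1, Finset.sum_singleton, Nat.cast_one] at this
  have hj0le : ∀ j : Fin r, σ' j0 ≤ σ' j := fun j => hmono j0 j (Fin.mk_le_of_le_val (Nat.zero_le _))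
  -- basic facts about m
  have hM : ∀ m : Fin r → ℕ, (∀ j, 0 < m j) → ∀ j, (m j : ℝ) ≤ ((∑ i, m i : ℕ) : ℝ) := by
    intro m hm j
    exact_mod_cast Finset.single_le_sum (f := fun i => m i) (fun i _ => Nat.zero_le _) (mem_univ j)
  have hMpos : ∀ m : Fin r → ℕ, (∀ j, 0 < m j) → (0 : ℝ) < ((∑ i, m i : ℕ) : ℝ) := by
    intro m hm
    have : 0 < ∑ i, m i := Finset.sum_pos (fun i _ => hm i) ⟨j0, mem_univ j0⟩
    exact_mod_cast this
  rcases lt_trichotomy σ 0 with hσ | hσ | hσ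
  · -- σ < 0
    refine ⟨σ + σ' j0, h1, (r : ℝ) ^ (-σ), Real.rpow_pos_of_pos (by exact_mod_cast hr) _, ?_⟩
    intro m hm
    have hmpos : ∀ j, (0 : ℝ) < (m j : ℝ) := fun j => by exact_mod_cast hm j
    have hm1 : ∀ j, (1 : ℝ) ≤ (m j : ℝ) := fun j => by exact_mod_cast hm j
    have hprodm : (0 : ℝ) < ∏ j, (m j : ℝ) := Finset.prod_pos fun j _ => hmpos j
    -- ∑ m ≤ r * ∏ m
    have hsum_le : ((∑ i, m i : ℕ) : ℝ) ≤ (r : ℝ) * ∏ j, (m j : ℝ) := by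
      have hnat : ∑ i, m i ≤ r * ∏ j, m j := by
        calc ∑ i, m i ≤ ∑ _i : Fin r, ∏ j, m j :=
              Finset.sum_le_sum fun i _ =>
                Finset.single_le_prod' (fun j _ => hm j) (mem_univ i)
          _ = r * ∏ j, m j := by
              rw [Finset.sum_const, Finset.card_univ, Fintype.card_fin, smul_eq_mul]
      exact_mod_cast hnat
    have step1 : ((∑ i, m i : ℕ) : ℝ) ^ (-σ) ≤ ((r : ℝ) * ∏ j, (m j : ℝ)) ^ (-σ) :=
      Real.rpow_le_rpow (hMpos m hm).le hsum_le (by linarith)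
    have step2 : ((r : ℝ) * ∏ j, (m j : ℝ)) ^ (-σ)
        = (r : ℝ) ^ (-σ) * ∏ j, (m j : ℝ) ^ (-σ) := by
      rw [Real.mul_rpow (by positivity) hprodm.le, ← Real.finset_prod_rpow _ _
        (fun j _ => (hmpos j).le)]
    calc (∏ j, (m j : ℝ) ^ (-(σ' j))) * ((∑ j, m j : ℕ) : ℝ) ^ (-σ)
        ≤ (∏ j, (m j : ℝ) ^ (-(σ' j))) * ((r : ℝ) ^ (-σ) * ∏ j, (m j : ℝ) ^ (-σ)) := by
          rw [← step2]
          exact mul_le_mul_of_nonneg_left step1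
            (Finset.prod_nonneg fun j _ => Real.rpow_nonneg (hmpos j).le _)
      _ = (r : ℝ) ^ (-σ) * ∏ j, (m j : ℝ) ^ (-(σ' j)) * (m j : ℝ) ^ (-σ) := by
          rw [Finset.prod_mul_distrib]; ring
      _ ≤ (r : ℝ) ^ (-σ) * ∏ j, (m j : ℝ) ^ (-(σ + σ' j0)) := by
          apply mul_le_mul_of_nonneg_left _ (Real.rpow_nonneg (by positivity) _)
          apply Finset.prod_le_prod
          · intro j _; positivity
          · intro j _
            rw [← Real.rpow_add (hmpos j)]
            exact Real.rpow_le_rpow_of_exponent_le (hm1 j) (by linarith [hj0le j])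
  · -- σ = 0
    refine ⟨σ' j0, by linarith, 1, one_pos, ?_⟩
    intro m hm
    have hmpos : ∀ j, (0 : ℝ) < (m j : ℝ) := fun j => by exact_mod_cast hm j
    have hm1 : ∀ j, (1 : ℝ) ≤ (m j : ℝ) := fun j => by exact_mod_cast hm j
    rw [hσ, neg_zero, Real.rpow_zero, mul_one, one_mul]
    apply Finset.prod_le_prod
    · intro j _; positivity
    · intro j _
      exact Real.rpow_le_rpow_of_exponent_le (hm1 j) (by linarith [hj0le j])
  · -- σ > 0
    set S : ℝ := ∑ j, max 0 (1 - σ' j) with hS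
    have hSnonneg : 0 ≤ S := Finset.sum_nonneg fun j _ => le_max_left _ _
    have hSσ : S < σ := by
      set A : Finset (Fin r) := Finset.univ.filter (fun j => σ' j < 1) with hA
      have hlow : ∀ i j : Fin r, i ≤ j → j ∈ A → i ∈ A := by
        intro i j hij hjA
        simp only [hA, mem_filter, mem_univ, true_and] at hjA ⊢
        exact lt_of_le_of_lt (hmono i j hij) hjA
      have hSA : S = ∑ j ∈ A, (1 - σ' j) := by
        rw [hS, ← Finset.sum_filter_add_sum_filter_not Finset.univ (fun j => σ' j < 1)
          (fun j => max 0 (1 - σ' j))]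
        have e1 : ∑ j ∈ Finset.univ.filter (fun j => σ' j < 1), max 0 (1 - σ' j)
            = ∑ j ∈ A, (1 - σ' j) := by
          apply Finset.sum_congr rfl
          intro j hj
          simp only [mem_filter] at hj
          rw [max_eq_right (by linarith [hj.2])]
        have e2 : ∑ j ∈ Finset.univ.filter (fun j => ¬ σ' j < 1), max 0 (1 - σ' j) = 0 := by
          apply Finset.sum_eq_zero
          intro j hj
          simp only [mem_filter] at hj
          rw [max_eq_left (by linarith [not_lt.mp hj.2])]
        rw [e1, e2, add_zero]
      rcases Nat.eq_zero_or_pos A.card with hk | hk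
      · rw [hSA, Finset.card_eq_zero.mp hk, Finset.sum_empty]; exact hσ
      · have hAeq := lowerset_eq_init A hlow
        have hcard_le : A.card ≤ r := le_trans (Finset.card_le_card (Finset.subset_univ A))
          (by simp)
        have hh := h A.card hk hcard_le
        rw [← hAeq] at hh
        rw [hSA, Finset.sum_sub_distrib, Finset.sum_const, nsmul_eq_mul, mul_one]
        linarith
    set δ : ℝ := (σ - S) / r with hδ
    have hδpos : 0 < δ := div_pos (by linarith) (by exact_mod_cast hr)
    set w : Fin r → ℝ := fun j => (max 0 (1 - σ' j) + δ) / σ with hw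
    have hwpos : ∀ j, 0 < w j := fun j =>
      div_pos (by have := le_max_left 0 (1 - σ' j); linarith) hσ
    have hwsum : ∑ j, w j = 1 := by
      rw [hw]
      simp only
      rw [← Finset.sum_div, Finset.sum_add_distrib, Finset.sum_const, Finset.card_univ,
        Fintype.card_fin, nsmul_eq_mul, ← hS, hδ]
      field_simp
      ring
    refine ⟨1 + δ, by linarith, 1, one_pos, ?_⟩
    intro m hm
    have hmpos : ∀ j, (0 : ℝ) < (m j : ℝ) := fun j => by exact_mod_cast hm j
    have hm1 : ∀ j, (1 : ℝ) ≤ (m j : ℝ) := fun j => by exact_mod_cast hm j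
    have hMge : ∀ j, (m j : ℝ) ≤ ((∑ i, m i : ℕ) : ℝ) := hM m hm
    have hM1 : (1 : ℝ) ≤ ((∑ i, m i : ℕ) : ℝ) := le_trans (hm1 j0) (hMge j0)
    -- ∏ m_j ^ w_j ≤ M
    have hprod_le : ∏ j, (m j : ℝ) ^ (w j) ≤ ((∑ i, m i : ℕ) : ℝ) := by
      calc ∏ j, (m j : ℝ) ^ (w j) ≤ ∏ j, ((∑ i, m i : ℕ) : ℝ) ^ (w j) := by
            apply Finset.prod_le_prod
            · intro j _; exact (Real.rpow_pos_of_pos (hmpos j) _).le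
            · intro j _
              exact Real.rpow_le_rpow (hmpos j).le (hMge j) (hwpos j).le
        _ = ((∑ i, m i : ℕ) : ℝ) ^ (∑ j, w j) := by
            exact (Real.rpow_sum_of_pos (lt_of_lt_of_le one_pos hM1) w Finset.univ).symm
        _ = ((∑ i, m i : ℕ) : ℝ) := by rw [hwsum, Real.rpow_one]
    have hprodw_pos : 0 < ∏ j, (m j : ℝ) ^ (w j) :=
      Finset.prod_pos fun j _ => Real.rpow_pos_of_pos (hmpos j) _
    have step1 : ((∑ i, m i : ℕ) : ℝ) ^ (-σ) ≤ (∏ j, (m j : ℝ) ^ (w j)) ^ (-σ) :=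
      Real.rpow_le_rpow_of_nonpos hprodw_pos hprod_le (by linarith)
    have step2 : (∏ j, (m j : ℝ) ^ (w j)) ^ (-σ) = ∏ j, (m j : ℝ) ^ (-(σ * w j)) := by
      rw [← Real.finset_prod_rpow _ _ (fun j _ => (Real.rpow_pos_of_pos (hmpos j) _).le)]
      apply Finset.prod_congr rfl
      intro j _
      rw [← Real.rpow_mul (hmpos j).le]
      ring_nf
    calc (∏ j, (m j : ℝ) ^ (-(σ' j))) * ((∑ j, m j : ℕ) : ℝ) ^ (-σ)
        ≤ (∏ j, (m j : ℝ) ^ (-(σ' j))) * ∏ j, (m j : ℝ) ^ (-(σ * w j)) := by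
          rw [← step2]
          exact mul_le_mul_of_nonneg_left step1
            (Finset.prod_nonneg fun j _ => Real.rpow_nonneg (hmpos j).le _)
      _ = ∏ j, (m j : ℝ) ^ (-(σ' j)) * (m j : ℝ) ^ (-(σ * w j)) := by
          rw [Finset.prod_mul_distrib]
      _ ≤ 1 * ∏ j, (m j : ℝ) ^ (-(1 + δ)) := by
          rw [one_mul]
          apply Finset.prod_le_prod
          · intro j _; positivity
          · intro j _
            rw [← Real.rpow_add (hmpos j)]
            apply Real.rpow_le_rpow_of_exponent_le (hm1 j)
            have : σ * w j = max 0 (1 - σ' j) + δ := by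
              rw [hw]; field_simp
            have hge : 1 - σ' j ≤ max 0 (1 - σ' j) := le_max_right _ _
            nlinarith [le_max_left 0 (1 - σ' j)]

/-- **Absolute convergence criterion for Mordell–Tornheim series.**
If `r ≥ 1` and `s_1, …, s_r` are complex numbers with real parts arranged so that
`σ_1 ≤ σ_2 ≤ ⋯ ≤ σ_r`, and `s` is a complex number with real part `σ` such that
`σ + σ_1 + ⋯ + σ_k > k` for every `1 ≤ k ≤ r`, then the Mordell–Tornheim series
`T(s_1, …, s_r; s) = ∑_{m_1, …, m_r ≥ 1} 1/(m_1^{s_1} ⋯ m_r^{s_r} (m_1 + ⋯ + m_r)^s)`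
is absolutely convergent. -/
theorem mordell_tornheim_absolutely_convergent (r : ℕ) (hr : 0 < r)
    (s' : Fin r → ℂ) (s : ℂ)
    (hmono : ∀ i j : Fin r, i ≤ j → (s' i).re ≤ (s' j).re)
    (h : ∀ k : ℕ, 1 ≤ k → k ≤ r →
      (k : ℝ) < s.re + ∑ j ∈ Finset.univ.filter (fun j : Fin r => (j : ℕ) < k), (s' j).re) :
    Summable (fun m : {m : Fin r → ℕ // ∀ j, 0 < m j} =>
      ‖((∏ j, (m.1 j : ℂ) ^ (s' j)) * ((∑ j, m.1 j : ℕ) : ℂ) ^ s)⁻¹‖) := by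
  obtain ⟨a, ha, C, hC, hbound⟩ := mt_key_bound r hr (fun j => (s' j).re) s.re hmono h
  -- summability of the dominating series
  have hdom : Summable (fun m : {m : Fin r → ℕ // ∀ j, 0 < m j} =>
      C * ∏ j, ((m.1 j : ℕ) : ℝ) ^ (-a)) := by
    have := (summable_pi_pnat_rpow r ha).mul_left C
    refine (((posTupleEquiv r).summable_iff).mpr this).congr fun x => ?_
    rfl
  apply Summable.of_nonneg_of_le (fun m => norm_nonneg _) _ hdom
  intro m
  obtain ⟨mf, hmf⟩ := m
  have hmpos : ∀ j, (0 : ℝ) < (mf j : ℝ) := fun j => by exact_mod_cast hmf j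
  have hMpos : 0 < ((∑ j, mf j : ℕ) : ℝ) := by
    have : 0 < ∑ j, mf j := Finset.sum_pos (fun j _ => hmf j) ⟨⟨0, hr⟩, Finset.mem_univ _⟩
    exact_mod_cast this
  -- compute the norm
  have hnorm : ‖((∏ j, (mf j : ℂ) ^ (s' j)) * ((∑ j, mf j : ℕ) : ℂ) ^ s)⁻¹‖
      = (∏ j, (mf j : ℝ) ^ (-(s' j).re)) * ((∑ j, mf j : ℕ) : ℝ) ^ (-s.re) := by
    rw [norm_inv, norm_mul, norm_prod]
    have e1 : ∀ j, ‖(mf j : ℂ) ^ (s' j)‖ = (mf j : ℝ) ^ (s' j).re := by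
      intro j
      rw [show ((mf j : ℕ) : ℂ) = (((mf j : ℕ) : ℝ) : ℂ) by push_cast; ring,
        Complex.norm_cpow_eq_rpow_re_of_pos (hmpos j)]
    have e2 : ‖((∑ j, mf j : ℕ) : ℂ) ^ s‖ = ((∑ j, mf j : ℕ) : ℝ) ^ s.re := by
      rw [
        show ((((∑ j, mf j : ℕ)) : ℕ) : ℂ) = ((((∑ j, mf j : ℕ) : ℕ) : ℝ) : ℂ) by push_cast; ring,
        Complex.norm_cpow_eq_rpow_re_of_pos hMpos]
    rw [e2]
    rw [Finset.prod_congr rfl (fun j _ => e1 j)]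
    rw [mul_inv, ← Finset.prod_inv_distrib]
    congr 1
    · exact Finset.prod_congr rfl fun j _ => (Real.rpow_neg (hmpos j).le _).symm
    · exact (Real.rpow_neg hMpos.le _).symm
  rw [hnorm]
  exact hbound mf hmf
end

section
/- The triple series ∑_{n_1 > n_2 > n_3 > 0} n_1^{-2} n_3^{-2}, summed over triples of positive integers with n_1 > n_2 > n_3, diverges (is not summable). Consequently, the conditions σ_1 > 1 and σ_1 + ⋯ + σ_r > r are not sufficient for absolute convergence of the multiple zeta series, since they are satisfied by s_1 = 2, s_2 = 0, s_3 = 2. -/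
/-- The triple series `∑_{n₁ > n₂ > n₃ > 0} n₁⁻² n₃⁻²` diverges: the family
`(n₁, n₂, n₃) ↦ n₁⁻² n₃⁻²`, indexed by triples of positive integers with
`n₁ > n₂ > n₃ > 0`, is not summable.  Hence the conditions `σ₁ > 1` and
`σ₁ + ⋯ + σ_r > r` (satisfied by `s₁ = 2, s₂ = 0, s₃ = 2`) do not suffice for
absolute convergence of the multiple zeta series. -/
theorem counterexample_mzv_convergence :
    ¬ Summable (fun p : {p : ℕ × ℕ × ℕ // 0 < p.2.2 ∧ p.2.2 < p.2.1 ∧ p.2.1 < p.1} =>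
      1 / ((p.1.1 : ℝ) ^ 2 * (p.1.2.2 : ℝ) ^ 2)) := by
  intro hS
  -- restrict to the slice n₃ = 1
  set S : Set (ℕ × ℕ) := {q | 1 < q.2 ∧ q.2 < q.1} with hSdef
  have h2 : Summable fun q : ↑S => 1 / ((q.1.1 : ℝ) ^ 2) := by
    have h := hS.comp_injective
      (i := fun q : ↑S => (⟨(q.1.1, q.1.2, 1), one_pos, q.2.1, q.2.2⟩ :
        {p : ℕ × ℕ × ℕ // 0 < p.2.2 ∧ p.2.2 < p.2.1 ∧ p.2.1 < p.1})) ?_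
    · simpa [Function.comp_def] using h
    · rintro ⟨⟨a, b⟩, hab⟩ ⟨⟨c, d⟩, hcd⟩ hq
      simp_all [Prod.ext_iff]
  have hg : Summable (Set.indicator S (fun q : ℕ × ℕ => 1 / ((q.1 : ℝ) ^ 2))) := by
    rw [← summable_subtype_iff_indicator]
    exact h2
  set g : ℕ × ℕ → ℝ := Set.indicator S (fun q : ℕ × ℕ => 1 / ((q.1 : ℝ) ^ 2)) with hgdef
  have hg0 : ∀ q, 0 ≤ g q := by
    intro q
    apply Set.indicator_nonneg
    intro x _
    positivity
  have hfac := (summable_prod_of_nonneg hg0).mp hg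
  set T : ℕ → ℝ := fun n => ∑' m, g (n, m) with hTdef
  have hT : Summable T := hfac.2
  -- lower bound: T n ≥ (n-2)/n²
  have hlow : ∀ k : ℕ, 1 / (2 * ((k : ℝ) + 4)) ≤ T (k + 4) := by
    intro k
    have hsum : ∑ m ∈ Finset.Ioo 1 (k + 4), g (k + 4, m) ≤ T (k + 4) :=
      Summable.sum_le_tsum _ (fun m _ => hg0 _) (hfac.1 (k + 4))
    have hval : ∑ m ∈ Finset.Ioo 1 (k + 4), g (k + 4, m)
        = ((k + 2 : ℕ) : ℝ) * (1 / ((k + 4 : ℕ) : ℝ) ^ 2) := by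
      have hc : ∀ m ∈ Finset.Ioo 1 (k + 4), g (k + 4, m) = 1 / ((k + 4 : ℕ) : ℝ) ^ 2 := by
        intro m hm
        rw [Finset.mem_Ioo] at hm
        have hmem : ((k + 4 : ℕ), m) ∈ S := ⟨hm.1, hm.2⟩
        exact Set.indicator_of_mem hmem _
      rw [Finset.sum_congr rfl hc, Finset.sum_const, Nat.card_Ioo, nsmul_eq_mul]
      norm_num
    refine le_trans ?_ hsum
    rw [hval]
    push_cast
    rw [show ((k : ℝ) + 2) * (1 / ((k : ℝ) + 4) ^ 2) = ((k : ℝ) + 2) / ((k : ℝ) + 4) ^ 2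
      from by ring]
    have hx : (0 : ℝ) ≤ (k : ℝ) := Nat.cast_nonneg k
    rw [div_le_div_iff₀ (by positivity) (by positivity)]
    nlinarith
  have hshift : Summable fun k : ℕ => T (k + 4) := (summable_nat_add_iff 4).2 hT
  have h3 : Summable fun k : ℕ => 1 / (2 * ((k : ℝ) + 4)) :=
    Summable.of_nonneg_of_le (fun k => by positivity) hlow hshift
  have h4 : Summable fun k : ℕ => 1 / ((k : ℝ) + 4) := by
    have := h3.mul_left 2
    refine this.congr fun k => ?_
    field_simp
  have h5 : Summable fun k : ℕ => 1 / ((k : ℝ)) := by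
    rw [← summable_nat_add_iff 4]
    refine h4.congr fun k => ?_
    push_cast
    ring_nf
  exact Real.not_summable_one_div_natCast h5
end

section
/- Let r and s_1, s_2, ..., s_r be positive integers, and let x_1, x_2, ..., x_r be non-zero real numbers such that x := x_1 + x_2 + ⋯ + x_r ≠ 0. Then ∏_{j=1}^r x_j^{-s_j} = ∑_{j=1}^r ∑_{(a_k)_{k≠j}, 0 ≤ a_k ≤ s_k − 1} M_j · x^{-s_j - A_j} · ∏_{k≠j} x_k^{a_k - s_k}, where A_j := ∑_{k≠j} a_k and M_j := (s_j + A_j − 1)! / ((s_j − 1)! · ∏_{k≠j} a_k!). -/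
open Finset

section
variable {r : ℕ}

noncomputable def pc (m : ℕ) (a : Fin r → ℕ) : ℝ :=
  (Nat.factorial (m - 1 + ∑ k, a k) : ℝ) /
    ((Nat.factorial (m - 1) : ℝ) * ∏ k, (Nat.factorial (a k) : ℝ))

lemma fact_ne (n : ℕ) : (Nat.factorial n : ℝ) ≠ 0 := by
  exact_mod_cast (Nat.factorial_pos n).ne'

lemma prod_fact_ne (a : Fin r → ℕ) : (∏ k, (Nat.factorial (a k) : ℝ)) ≠ 0 :=
  Finset.prod_ne_zero_iff.mpr fun k _ => fact_ne _

lemma erase_prod_fact_ne (a : Fin r → ℕ) (k : Fin r) :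
    (∏ i ∈ univ.erase k, (Nat.factorial (a i) : ℝ)) ≠ 0 :=
  Finset.prod_ne_zero_iff.mpr fun i _ => fact_ne _

lemma prod_update_fact (a : Fin r → ℕ) (k : Fin r) (v : ℕ) :
    (∏ i, (Nat.factorial (Function.update a k v i) : ℝ)) =
      (Nat.factorial v : ℝ) * ∏ i ∈ univ.erase k, (Nat.factorial (a i) : ℝ) := by
  rw [← Finset.mul_prod_erase univ _ (mem_univ k)]
  rw [Function.update_self]
  congr 1
  exact Finset.prod_congr rfl fun i hi => by rw [Function.update_of_ne (mem_erase.mp hi).1]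

lemma prod_fact_split (a : Fin r → ℕ) (k : Fin r) :
    (∏ i, (Nat.factorial (a i) : ℝ)) =
      (Nat.factorial (a k) : ℝ) * ∏ i ∈ univ.erase k, (Nat.factorial (a i) : ℝ) :=
  (Finset.mul_prod_erase univ _ (mem_univ k)).symm

lemma sum_update_nat (a : Fin r → ℕ) (k : Fin r) (v : ℕ) :
    (∑ i, Function.update a k v i) = v + ∑ i ∈ univ.erase k, a i := by
  rw [← Finset.add_sum_erase univ _ (mem_univ k), Function.update_self]
  congr 1
  exact Finset.sum_congr rfl fun i hi => by rw [Function.update_of_ne (mem_erase.mp hi).1]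

lemma sum_split_nat (a : Fin r → ℕ) (k : Fin r) :
    (∑ i, a i) = a k + ∑ i ∈ univ.erase k, a i :=
  (Finset.add_sum_erase univ _ (mem_univ k)).symm

lemma pascal (m : ℕ) (hm : 1 ≤ m) (a : Fin r → ℕ) :
    pc m a = (if m - 1 + ∑ k, a k = 0 then 1 else 0)
      + (if 1 < m then pc (m - 1) a else 0)
      + ∑ k, (if a k = 0 then 0 else pc m (Function.update a k (a k - 1))) := by
  by_cases hN : m - 1 + ∑ k, a k = 0
  · have hm1 : m = 1 := by omega
    have hsa : ∑ k, a k = 0 := by omega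
    have hak : ∀ k, a k = 0 := fun k => (Finset.sum_eq_zero_iff.mp hsa) k (mem_univ k)
    subst hm1
    simp only [hN, if_pos, if_true]
    have : ∀ k : Fin r, (if a k = 0 then (0:ℝ) else pc 1 (Function.update a k (a k - 1))) = 0 := by
      intro k; simp [hak k]
    rw [Finset.sum_congr rfl (fun k _ => this k)]
    simp [pc, hsa, hak]
  · set A := ∑ k, a k with hA
    set N' := m - 1 + A - 1 with hN'
    have hNe : m - 1 + A = N' + 1 := by omega
    set D := (Nat.factorial (m - 1) : ℝ) * ∏ k, (Nat.factorial (a k) : ℝ) with hD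
    have hDne : D ≠ 0 := mul_ne_zero (fact_ne _) (prod_fact_ne a)
    have step1 : pc m a = ((m - 1 : ℕ) : ℝ) * ((Nat.factorial N' : ℝ) / D)
        + ∑ k, (a k : ℝ) * ((Nat.factorial N' : ℝ) / D) := by
      have hfac : (Nat.factorial (m - 1 + A) : ℝ)
          = (((m - 1 : ℕ) : ℝ) + (A : ℝ)) * (Nat.factorial N' : ℝ) := by
        have hc : ((m - 1 : ℕ) : ℝ) + (A : ℝ) = (N' : ℝ) + 1 := by exact_mod_cast hNe
        rw [hNe, Nat.factorial_succ]
        push_cast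
        linear_combination (-(Nat.factorial N' : ℝ)) * hc
      have hAc : (A : ℝ) = ∑ k, (a k : ℝ) := by rw [hA]; push_cast; rfl
      rw [pc, ← hD, ← hA, hfac, hAc, ← Finset.sum_mul]
      ring
    have mid : ((m - 1 : ℕ) : ℝ) * ((Nat.factorial N' : ℝ) / D)
        = if 1 < m then pc (m - 1) a else 0 := by
      by_cases hm2 : 1 < m
      · rw [if_pos hm2]
        have h1 : m - 1 - 1 + A = N' := by omega
        have h2 : m - 1 = (m - 1 - 1) + 1 := by omega
        rw [pc, ← hA, h1, hD, h2, Nat.factorial_succ]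
        have hx : ((m - 1 - 1 + 1 : ℕ) : ℝ) ≠ 0 := by positivity
        field_simp
        rw [Nat.add_sub_cancel]
        push_cast
        ring
      · rw [if_neg hm2]
        have : m - 1 = 0 := by omega
        simp [this]
    have kterm : ∀ k : Fin r, (a k : ℝ) * ((Nat.factorial N' : ℝ) / D)
        = if a k = 0 then 0 else pc m (Function.update a k (a k - 1)) := by
      intro k
      by_cases hk : a k = 0
      · simp [hk]
      · rw [if_neg hk]
        have h1 : m - 1 + ∑ i, Function.update a k (a k - 1) i = N' := by
          rw [sum_update_nat]
          have := sum_split_nat a k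
          omega
        rw [pc, h1, prod_update_fact]
        rw [hD, prod_fact_split a k]
        have h2 : a k = (a k - 1) + 1 := by omega
        rw [h2, Nat.factorial_succ]
        have hx : ((a k - 1 + 1 : ℕ) : ℝ) ≠ 0 := by positivity
        have hersane := erase_prod_fact_ne a k
        push_cast
        field_simp
    rw [step1, mid, Finset.sum_congr rfl (fun k _ => kterm k), if_neg hN]
    ring
def pB (s : Fin r → ℕ) (j : Fin r) : Finset (Fin r → ℕ) :=
  Fintype.piFinset (fun k => Finset.range (if k = j then 1 else s k))

lemma mem_pB {s : Fin r → ℕ} {j : Fin r} {a : Fin r → ℕ} :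
    a ∈ pB s j ↔ ∀ k, a k < if k = j then 1 else s k := by
  simp [pB, Fintype.mem_piFinset, Finset.mem_range]

lemma pB_update_self (s : Fin r → ℕ) (j : Fin r) (v : ℕ) :
    pB (Function.update s j v) j = pB s j := by
  unfold pB
  congr 1
  funext k
  by_cases hk : k = j <;> simp [hk, Function.update_of_ne]

lemma pB_empty {s : Fin r → ℕ} {j k : Fin r} (hk : k ≠ j) (hsk : s k = 0) :
    pB s j = ∅ := by
  unfold pB
  rw [Fintype.piFinset_eq_empty]
  exact ⟨k, by simp [hk, hsk]⟩

lemma zero_mem_pB {s : Fin r → ℕ} {j : Fin r} (hs : ∀ k, 0 < s k) :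
    (fun _ => 0 : Fin r → ℕ) ∈ pB s j := by
  rw [mem_pB]
  intro k
  by_cases hk : k = j <;> simp [hk, hs k]

lemma shift_sum (s : Fin r → ℕ) {j k : Fin r} (hkj : k ≠ j)
    (g : (Fin r → ℕ) → ℝ) :
    (∑ a ∈ pB s j, if a k = 0 then 0 else g (Function.update a k (a k - 1)))
      = ∑ b ∈ pB (Function.update s k (s k - 1)) j, g b := by
  have h1 : ∀ a : Fin r → ℕ,
      (if a k = 0 then (0:ℝ) else g (Function.update a k (a k - 1)))
        = (if a k ≠ 0 then g (Function.update a k (a k - 1)) else 0) := by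
    intro a; rw [ite_not]
  simp only [h1]
  rw [← Finset.sum_filter]
  refine Finset.sum_nbij' (fun a => Function.update a k (a k - 1))
    (fun b => Function.update b k (b k + 1)) ?_ ?_ ?_ ?_ (fun a ha => rfl)
  · intro a ha
    rw [Finset.mem_filter, mem_pB] at ha
    rw [mem_pB]
    intro i
    by_cases hik : i = k
    · subst hik
      have := ha.1 i
      simp only [if_neg hkj] at this
      have h2 := ha.2
      rw [Function.update_self, if_neg hkj, Function.update_self]
      omega
    · rw [Function.update_of_ne hik, Function.update_of_ne hik]
      exact ha.1 i
  · intro b hb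
    rw [mem_pB] at hb
    rw [Finset.mem_filter, mem_pB]
    refine ⟨fun i => ?_, ?_⟩
    · by_cases hik : i = k
      · subst hik
        have := hb i
        simp only [if_neg hkj, Function.update_self] at this ⊢
        omega
      · rw [Function.update_of_ne hik]
        have := hb i
        rwa [Function.update_of_ne hik] at this
    · simp
  · intro a ha
    rw [Finset.mem_filter] at ha
    rw [Function.update_idem, Function.update_self]
    have : a k - 1 + 1 = a k := by omega
    rw [this, Function.update_eq_self]
  · intro b hb
    rw [Function.update_idem, Function.update_self]
    have : b k + 1 - 1 = b k := by omega
    rw [this, Function.update_eq_self]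

noncomputable def pT (s : Fin r → ℕ) (t : Fin r → ℝ) (j : Fin r) : ℝ :=
  ∑ a ∈ pB s j, pc (s j) a * (t j ^ s j * ∏ k, t k ^ a k)

noncomputable def pF (s : Fin r → ℕ) (t : Fin r → ℝ) : ℝ := ∑ j, pT s t j

lemma pT_zero {s : Fin r → ℕ} (t : Fin r → ℝ) {j k : Fin r} (hk : k ≠ j) (hsk : s k = 0) :
    pT s t j = 0 := by
  rw [pT, pB_empty hk hsk, Finset.sum_empty]

-- evaluation of the "base" part
lemma base_sum (s : Fin r → ℕ) (hs : ∀ k, 0 < s k) (t : Fin r → ℝ) (j : Fin r) :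
    (∑ a ∈ pB s j, (if s j - 1 + ∑ k, a k = 0 then (1:ℝ) else 0) * (t j ^ s j * ∏ k, t k ^ a k))
      = if s j = 1 then t j else 0 := by
  by_cases hj : s j = 1
  · rw [if_pos hj]
    rw [Finset.sum_eq_single (fun _ => 0 : Fin r → ℕ)]
    · simp [hj]
    · intro b hb hb0
      have : ∃ k, b k ≠ 0 := by
        by_contra h
        push_neg at h
        exact hb0 (funext fun k => h k)
      obtain ⟨k, hk⟩ := this
      have : s j - 1 + ∑ k, b k ≠ 0 := by
        have : 0 < ∑ k, b k :=
          Finset.sum_pos' (fun i _ => Nat.zero_le _) ⟨k, Finset.mem_univ k, Nat.pos_of_ne_zero hk⟩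
        omega
      rw [if_neg this, zero_mul]
    · intro h
      exact absurd (zero_mem_pB hs) h
  · rw [if_neg hj]
    refine Finset.sum_eq_zero fun a ha => ?_
    have : s j - 1 + ∑ k, a k ≠ 0 := by
      have := hs j
      omega
    rw [if_neg this, zero_mul]


lemma prod_pow_update (t : Fin r → ℝ) (a : Fin r → ℕ) (k : Fin r) (v : ℕ) :
    (∏ i, t i ^ (Function.update a k v i)) = t k ^ v * ∏ i ∈ univ.erase k, t i ^ a i := by
  rw [← Finset.mul_prod_erase univ _ (mem_univ k), Function.update_self]
  congr 1
  exact Finset.prod_congr rfl fun i hi => by rw [Function.update_of_ne (mem_erase.mp hi).1]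

lemma prod_pow_split (t : Fin r → ℝ) (a : Fin r → ℕ) (k : Fin r) :
    (∏ i, t i ^ a i) = t k ^ a k * ∏ i ∈ univ.erase k, t i ^ a i :=
  (Finset.mul_prod_erase univ _ (mem_univ k)).symm

lemma pT_expand (s : Fin r → ℕ) (hs : ∀ k, 0 < s k) (t : Fin r → ℝ) (j : Fin r) :
    pT s t j = (if s j = 1 then t j else 0)
      + (if 1 < s j then t j * pT (Function.update s j (s j - 1)) t j else 0)
      + ∑ k, (if k = j then 0 else t k * pT (Function.update s k (s k - 1)) t j) := by
  rw [pT]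
  have expand : ∀ a ∈ pB s j,
      pc (s j) a * (t j ^ s j * ∏ k, t k ^ a k)
        = (if s j - 1 + ∑ k, a k = 0 then (1:ℝ) else 0) * (t j ^ s j * ∏ k, t k ^ a k)
          + (if 1 < s j then pc (s j - 1) a else 0) * (t j ^ s j * ∏ k, t k ^ a k)
          + ∑ k, (if a k = 0 then 0
              else pc (s j) (Function.update a k (a k - 1)) * (t j ^ s j * ∏ i, t i ^ a i)) := by
    intro a _
    rw [pascal (s j) (hs j) a, add_mul, add_mul, Finset.sum_mul]
    congr 1
    exact Finset.sum_congr rfl fun k _ => by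
      by_cases hk : a k = 0 <;> simp [hk]
  rw [Finset.sum_congr rfl expand, Finset.sum_add_distrib, Finset.sum_add_distrib]
  congr 1
  · congr 1
    · exact base_sum s hs t j
    · -- middle part
      by_cases h2 : 1 < s j
      · rw [if_pos h2]
        simp only [if_pos h2]
        obtain ⟨m, hm⟩ : ∃ m, s j = m + 1 := ⟨s j - 1, by omega⟩
        rw [pT, pB_update_self, Function.update_self]
        rw [Finset.mul_sum]
        refine Finset.sum_congr rfl fun a _ => ?_
        rw [hm]
        simp only [Nat.add_sub_cancel]
        rw [pow_succ]
        ring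
      · rw [if_neg h2]
        simp only [if_neg h2, zero_mul]
        exact Finset.sum_const_zero
  · -- third part
    rw [Finset.sum_comm]
    refine Finset.sum_congr rfl fun k _ => ?_
    by_cases hkj : k = j
    · subst hkj
      rw [if_pos rfl]
      refine Finset.sum_eq_zero fun a ha => ?_
      have : a k = 0 := by
        have := (mem_pB.mp ha) k
        simpa using this
      rw [if_pos this]
    · rw [if_neg hkj]
      have step : ∀ a ∈ pB s j,
          (if a k = 0 then (0:ℝ)
            else pc (s j) (Function.update a k (a k - 1)) * (t j ^ s j * ∏ i, t i ^ a i))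
          = (if a k = 0 then 0
            else (fun b => t k * (pc (s j) b * (t j ^ s j * ∏ i, t i ^ b i)))
              (Function.update a k (a k - 1))) := by
        intro a _
        by_cases hak : a k = 0
        · simp [hak]
        · rw [if_neg hak, if_neg hak]
          dsimp only
          rw [prod_pow_update, prod_pow_split t a k]
          obtain ⟨w, hw⟩ : ∃ w, a k = w + 1 := ⟨a k - 1, by omega⟩
          rw [hw]
          simp only [Nat.add_sub_cancel]
          rw [pow_succ]
          ring
      rw [Finset.sum_congr rfl step,
        shift_sum s hkj (fun b => t k * (pc (s j) b * (t j ^ s j * ∏ i, t i ^ b i)))]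
      rw [pT, Finset.mul_sum]
      refine Finset.sum_congr rfl fun b _ => ?_
      rw [Function.update_of_ne (Ne.symm hkj)]

lemma pF_eq_one : ∀ (n : ℕ) (s : Fin r → ℕ), (∑ i, s i) = n → (∀ i, 0 < s i) →
    ∀ t : Fin r → ℝ, (∑ i, t i) = 1 → pF s t = 1 := by
  intro n
  induction n using Nat.strong_induction_on with
  | _ n IH =>
    intro s hsn hs t ht
    rw [pF, Finset.sum_congr rfl (fun j _ => pT_expand s hs t j),
      Finset.sum_add_distrib, Finset.sum_add_distrib, Finset.sum_comm]
    rw [← Finset.sum_add_distrib, ← Finset.sum_add_distrib]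
    have key : ∀ i : Fin r,
        (if s i = 1 then t i else 0)
          + (if 1 < s i then t i * pT (Function.update s i (s i - 1)) t i else 0)
          + ∑ j, (if i = j then 0 else t i * pT (Function.update s i (s i - 1)) t j)
        = t i := by
      intro i
      by_cases h1 : s i = 1
      · rw [if_pos h1, if_neg (by omega)]
        have hz : ∀ j : Fin r, (if i = j then (0:ℝ)
            else t i * pT (Function.update s i (s i - 1)) t j) = 0 := by
          intro j
          by_cases hij : i = j
          · rw [if_pos hij]
          · rw [if_neg hij]
            rw [pT_zero t hij (by rw [Function.update_self]; omega), mul_zero]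
        rw [Finset.sum_congr rfl (fun j _ => hz j), Finset.sum_const_zero]
        ring
      · have h2 : 1 < s i := by have := hs i; omega
        rw [if_neg h1, if_pos h2]
        have hC : (∑ j, (if i = j then (0:ℝ)
            else t i * pT (Function.update s i (s i - 1)) t j))
            = t i * pF (Function.update s i (s i - 1)) t
              - t i * pT (Function.update s i (s i - 1)) t i := by
          have hsplit : ∀ j : Fin r, (if i = j then (0:ℝ)
              else t i * pT (Function.update s i (s i - 1)) t j)
              = t i * pT (Function.update s i (s i - 1)) t j
                - (if i = j then t i * pT (Function.update s i (s i - 1)) t j else 0) := by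
            intro j
            by_cases hij : i = j <;> simp [hij]
          rw [Finset.sum_congr rfl (fun j _ => hsplit j), Finset.sum_sub_distrib,
            Finset.sum_ite_eq, if_pos (mem_univ i), pF, Finset.mul_sum]
        rw [hC]
        have hIH : pF (Function.update s i (s i - 1)) t = 1 := by
          have hle : s i ≤ ∑ k, s k :=
            Finset.single_le_sum (fun k _ => Nat.zero_le _) (mem_univ i)
          have hsum' : (∑ k, Function.update s i (s i - 1) k) = n - 1 := by
            rw [sum_update_nat]
            have := sum_split_nat s i
            omega
          refine IH (n - 1) (by omega) _ hsum' (fun k => ?_) t ht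
          by_cases hk : k = i
          · subst hk; rw [Function.update_self]; omega
          · rw [Function.update_of_ne hk]; exact hs k
        rw [hIH]
        ring
    rw [Finset.sum_congr rfl (fun i _ => key i)]
    exact ht

lemma split_prod (j : Fin r) (f : Fin r → ℝ) :
    ∏ i, f i = f j * ∏ k : {k : Fin r // k ≠ j}, f k.1 := by
  rw [← Finset.mul_prod_erase univ f (mem_univ j)]
  congr 1
  exact Finset.prod_subtype _ (fun x => by simp) _

lemma split_sum (j : Fin r) (f : Fin r → ℕ) :
    ∑ i, f i = f j + ∑ k : {k : Fin r // k ≠ j}, f k.1 := by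
  rw [← Finset.add_sum_erase univ f (mem_univ j)]
  congr 1
  exact Finset.sum_subtype _ (fun x => by simp) _

end


/-- **Partial fraction decomposition (Lemma parfrac).**
Let `r ≥ 1` and let `s_1, …, s_r` be positive integers, and let `x_1, …, x_r` be
nonzero reals with `x := x_1 + ⋯ + x_r ≠ 0`.  Then
`∏_j x_j^{-s_j} = ∑_{j=1}^r ∑_{(a_k)_{k≠j}, 0 ≤ a_k ≤ s_k - 1}
   M_j · x^{-s_j - A_j} · ∏_{k≠j} x_k^{a_k - s_k}`,
where `A_j = ∑_{k≠j} a_k` and `M_j = (s_j + A_j - 1)!/((s_j - 1)! ∏_{k≠j} a_k!)`. -/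
theorem partial_fraction_decomposition (r : ℕ) (hr : 0 < r)
    (s : Fin r → ℕ) (hs : ∀ j, 0 < s j)
    (x : Fin r → ℝ) (hx : ∀ j, x j ≠ 0) (hsum : (∑ j, x j) ≠ 0) :
    (∏ j, x j ^ (-(s j : ℤ))) =
      ∑ j : Fin r, ∑ a : (∀ k : {k : Fin r // k ≠ j}, Fin (s k.1)),
        ((Nat.factorial (s j + (∑ k : {k : Fin r // k ≠ j}, (a k : ℕ)) - 1) : ℝ) /
            ((Nat.factorial (s j - 1) *
              ∏ k : {k : Fin r // k ≠ j}, Nat.factorial (a k) : ℕ) : ℝ)) *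
          (∑ i, x i) ^ (-((s j : ℤ) + (∑ k : {k : Fin r // k ≠ j}, (a k : ℕ) : ℕ))) *
          ∏ k : {k : Fin r // k ≠ j}, x k.1 ^ ((a k : ℤ) - (s k.1 : ℤ)) := by
  set X : ℝ := ∑ i, x i with hX
  set t : Fin r → ℝ := fun i => x i / X with ht
  have htsum : (∑ i, t i) = 1 := by
    rw [ht, ← Finset.sum_div, ← hX, div_self hsum]
  have hmain : pF s t = 1 := pF_eq_one (∑ i, s i) s rfl hs t htsum
  have claim : ∀ j : Fin r,
      (∑ a : (∀ k : {k : Fin r // k ≠ j}, Fin (s k.1)),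
        ((Nat.factorial (s j + (∑ k : {k : Fin r // k ≠ j}, (a k : ℕ)) - 1) : ℝ) /
            ((Nat.factorial (s j - 1) *
              ∏ k : {k : Fin r // k ≠ j}, Nat.factorial (a k) : ℕ) : ℝ)) *
          X ^ (-((s j : ℤ) + (∑ k : {k : Fin r // k ≠ j}, (a k : ℕ) : ℕ))) *
          ∏ k : {k : Fin r // k ≠ j}, x k.1 ^ ((a k : ℤ) - (s k.1 : ℤ)))
      = pT s t j * ∏ i, x i ^ (-(s i : ℤ)) := by
    intro j
    rw [pT, Finset.sum_mul]
    refine Finset.sum_nbij'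
      (fun a => (fun k => if h : k = j then 0 else (a ⟨k, h⟩ : ℕ)))
      (fun b => (fun k => if h : b k.1 < s k.1 then ⟨b k.1, h⟩ else ⟨0, hs k.1⟩))
      (fun a _ => ?_) (fun b _ => mem_univ _) (fun a _ => ?_) (fun b hb => ?_)
      (fun a _ => ?_)
    · rw [mem_pB]
      intro k
      by_cases hk : k = j
      · simp [hk]
      · simp only [dif_neg hk, if_neg hk]
        exact (a ⟨k, hk⟩).isLt
    · funext k
      dsimp only
      simp only [dif_neg k.2]
      rw [dif_pos (a k).isLt]
    · funext k
      dsimp only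
      rw [mem_pB] at hb
      by_cases hk : (k : Fin r) = j
      · rw [dif_pos hk]
        have := hb k
        rw [if_pos hk] at this
        omega
      · rw [dif_neg hk]
        have h2 := hb k
        rw [if_neg hk] at h2
        rw [dif_pos h2]
    · -- term equality
      dsimp only
      set b : Fin r → ℕ := fun k => if h : k = j then 0 else (a ⟨k, h⟩ : ℕ) with hb
      have hbj : b j = 0 := dif_pos rfl
      have hbk : ∀ k : {k : Fin r // k ≠ j}, b k.1 = (a k : ℕ) := by
        intro k
        rw [hb]
        exact dif_neg k.2
      set A : ℕ := ∑ k : {k : Fin r // k ≠ j}, (a k : ℕ) with hA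
      have hsumb : ∑ i, b i = A := by
        rw [split_sum j b, hbj, zero_add, hA]
        exact Finset.sum_congr rfl fun k _ => hbk k
      have hXne : X ≠ 0 := hsum
      have hcoeff : ((Nat.factorial (s j + A - 1) : ℝ) /
          ((Nat.factorial (s j - 1) *
            ∏ k : {k : Fin r // k ≠ j}, Nat.factorial (a k) : ℕ) : ℝ)) = pc (s j) b := by
        rw [pc, hsumb]
        have h1 : s j - 1 + A = s j + A - 1 := by have := hs j; omega
        rw [h1]
        congr 1
        push_cast
        congr 1
        rw [split_prod j (fun i => (Nat.factorial (b i) : ℝ)), hbj, Nat.factorial_zero,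
          Nat.cast_one, one_mul]
        exact Finset.prod_congr rfl fun k _ => by rw [hbk k]
      have h1' : t j ^ s j = x j ^ ((s j : ℕ) : ℤ) * X ^ (-((s j : ℕ) : ℤ)) := by
        simp only [ht]
        rw [zpow_natCast, zpow_neg, zpow_natCast, div_pow, div_eq_mul_inv]
      have h2' : (∏ i, t i ^ b i) = (∏ i, x i ^ ((b i : ℕ) : ℤ)) * X ^ (-(A : ℤ)) := by
        calc (∏ i, t i ^ b i) = (∏ i, x i ^ b i) / X ^ (∑ i, b i) := by
              simp only [ht, div_pow]
              rw [Finset.prod_div_distrib, Finset.prod_pow_eq_pow_sum]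
          _ = (∏ i, x i ^ ((b i : ℕ) : ℤ)) * X ^ (-(A : ℤ)) := by
              rw [hsumb, div_eq_mul_inv, ← zpow_natCast X A, ← zpow_neg]
              exact congrArg (fun y => y * X ^ (-(A : ℤ)))
                (Finset.prod_congr rfl fun i _ => (zpow_natCast _ _).symm)
      have hq : (∏ i, x i ^ ((b i : ℕ) : ℤ)) * (∏ i, x i ^ (-(s i : ℤ)))
          = x j ^ (-((s j : ℕ) : ℤ))
            * ∏ k : {k : Fin r // k ≠ j}, x k.1 ^ ((a k : ℤ) - (s k.1 : ℤ)) := by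
        rw [← Finset.prod_mul_distrib]
        have hper : ∀ i, x i ^ ((b i : ℕ) : ℤ) * x i ^ (-(s i : ℤ))
            = x i ^ ((b i : ℤ) - (s i : ℤ)) := by
          intro i
          rw [← zpow_add₀ (hx i), sub_eq_add_neg]
        have e0 : ((0 : ℕ) : ℤ) - (s j : ℤ) = -((s j : ℕ) : ℤ) := by push_cast; ring
        rw [Finset.prod_congr rfl (fun i _ => hper i),
          split_prod j (fun i => x i ^ ((b i : ℤ) - (s i : ℤ))), hbj, e0]
        exact congrArg _ (Finset.prod_congr rfl fun k _ => by rw [hbk k])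
      have hXj : x j ^ ((s j : ℕ) : ℤ) * x j ^ (-((s j : ℕ) : ℤ)) = 1 := by
        rw [← zpow_add₀ (hx j)]
        simp
      have hXX : X ^ (-((s j : ℕ) : ℤ)) * X ^ (-(A : ℤ)) = X ^ (-((s j : ℤ) + (A : ℕ))) := by
        rw [← zpow_add₀ hXne]
        congr 1
        push_cast
        ring
      have hmainpow : x j ^ ((s j : ℕ) : ℤ) * X ^ (-((s j : ℕ) : ℤ))
            * ((∏ i, x i ^ ((b i : ℕ) : ℤ)) * X ^ (-(A : ℤ)))
            * (∏ i, x i ^ (-(s i : ℤ)))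
          = X ^ (-((s j : ℤ) + (A : ℕ)))
            * ∏ k : {k : Fin r // k ≠ j}, x k.1 ^ ((a k : ℤ) - (s k.1 : ℤ)) := by
        calc x j ^ ((s j : ℕ) : ℤ) * X ^ (-((s j : ℕ) : ℤ))
              * ((∏ i, x i ^ ((b i : ℕ) : ℤ)) * X ^ (-(A : ℤ)))
              * (∏ i, x i ^ (-(s i : ℤ)))
            = x j ^ ((s j : ℕ) : ℤ) * (X ^ (-((s j : ℕ) : ℤ)) * X ^ (-(A : ℤ)))
              * ((∏ i, x i ^ ((b i : ℕ) : ℤ)) * (∏ i, x i ^ (-(s i : ℤ)))) := by ring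
          _ = x j ^ ((s j : ℕ) : ℤ) * X ^ (-((s j : ℤ) + (A : ℕ)))
              * (x j ^ (-((s j : ℕ) : ℤ))
                * ∏ k : {k : Fin r // k ≠ j}, x k.1 ^ ((a k : ℤ) - (s k.1 : ℤ))) := by
              rw [hXX, hq]
          _ = (x j ^ ((s j : ℕ) : ℤ) * x j ^ (-((s j : ℕ) : ℤ)))
              * (X ^ (-((s j : ℤ) + (A : ℕ)))
                * ∏ k : {k : Fin r // k ≠ j}, x k.1 ^ ((a k : ℤ) - (s k.1 : ℤ))) := by ring
          _ = _ := by rw [hXj, one_mul]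
      rw [h1', h2', ← hcoeff, mul_assoc, mul_assoc]
      congr 1
      exact hmainpow.symm
  calc (∏ j, x j ^ (-(s j : ℤ)))
      = pF s t * ∏ j, x j ^ (-(s j : ℤ)) := by rw [hmain, one_mul]
    _ = ∑ j, pT s t j * ∏ i, x i ^ (-(s i : ℤ)) := by rw [pF, Finset.sum_mul]
    _ = _ := by
        rw [← Finset.sum_congr rfl (fun j _ => claim j)]
end

section
/- Every Mordell–Tornheim zeta value of depth r and weight w can be expressed as a rational linear combination of multiple zeta values of depth r and weight w. That is, if s_1, ..., s_r, s are positive integers with s_1 + ⋯ + s_r + s = w (and the defining series of T(s_1, ..., s_r; s) converges absolutely), then T(s_1, ..., s_r; s) lies in the ℚ-linear span of the set of multiple zeta values ζ(t_1, ..., t_r) with positive integer arguments satisfying t_1 ≥ 2, t_1 + ⋯ + t_r = w. -/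
/-- The term of the Mordell–Tornheim series `T(s_1, …, s_r; s)` with positive integer
arguments, indexed by tuples of positive integers `m_1, …, m_r`. -/
noncomputable def MTterm (r : ℕ) (s' : Fin r → ℕ) (s : ℕ)
    (m : {m : Fin r → ℕ // ∀ j, 0 < m j}) : ℝ :=
  1 / ((∏ j, (m.1 j : ℝ) ^ s' j) * ((∑ j, m.1 j : ℕ) : ℝ) ^ s)

/-- The Mordell–Tornheim zeta value `T(s_1, …, s_r; s)`. -/
noncomputable def MT (r : ℕ) (s' : Fin r → ℕ) (s : ℕ) : ℝ :=
  ∑' m, MTterm r s' s m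

/-- The term of the multiple zeta series `ζ(t_1, …, t_r)` (with `t_1 = t 0`), indexed
by strictly decreasing tuples of positive integers `n_1 > n_2 > ⋯ > n_r > 0`. -/
noncomputable def MZVterm (r : ℕ) (t : Fin r → ℕ)
    (n : {n : Fin r → ℕ // (∀ j, 0 < n j) ∧ ∀ i j : Fin r, i < j → n j < n i}) : ℝ :=
  ∏ j, 1 / ((n.1 j : ℝ) ^ t j)

/-- The multiple zeta value `ζ(t_1, …, t_r)`. -/
noncomputable def MZV (r : ℕ) (t : Fin r → ℕ) : ℝ :=
  ∑' n, MZVterm r t n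


open Finset
noncomputable section MTaux
abbrev Dpos := {x : ℕ → ℝ // ∀ j, 0 < x j}
def psum (x : Dpos) (k : ℕ) : ℝ := ∑ i ∈ range (k + 1), x.1 i
lemma psum_pos (x : Dpos) (k : ℕ) : 0 < psum x k :=
  Finset.sum_pos (fun i _ => x.2 i) (by simp)
def insOrd (q t : ℕ) : ℕ → ℕ := fun k =>
  if k < t then k else if k = t then q else if k ≤ q then k - 1 else k
def cgen (q : ℕ) (τ : ℕ → ℕ) (e : ℕ → ℕ) : Dpos → ℝ :=
  fun x => ∏ k ∈ range q, 1 / (∑ i ∈ range (k + 1), x.1 (τ i)) ^ e k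
lemma chain_pos (x : Dpos) (τ : ℕ → ℕ) (k : ℕ) :
    0 < ∑ i ∈ range (k + 1), x.1 (τ i) :=
  Finset.sum_pos (fun i _ => x.2 _) (by simp)

def Rlhs (q : ℕ) (a : ℕ → ℕ) (b : ℕ) : Dpos → ℝ :=
  fun x => (∏ k ∈ range q, 1 / psum x k ^ a k) * (1 / x.1 q ^ b)
def Rlhs' (Q : ℕ) (a : ℕ → ℕ) (a' b' g : ℕ) : Dpos → ℝ :=
  fun x => (∏ k ∈ range Q, 1 / psum x k ^ a k) * (1 / psum x Q ^ a') *
    (1 / x.1 (Q + 1) ^ b') * (1 / (psum x Q + x.1 (Q + 1)) ^ g)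
def IGens (q W : ℕ) : Set (Dpos → ℝ) :=
  {h | ∃ t e, t ≤ q ∧ (∀ k < q + 1, 1 ≤ e k) ∧ (∑ k ∈ range (q + 1), e k) = W ∧
    h = cgen (q + 1) (insOrd q t) e}
def mulLM {X : Type*} (W : X → ℝ) : (X → ℝ) →ₗ[ℚ] (X → ℝ) where
  toFun f := fun x => W x * f x
  map_add' f g := by ext x; simp [mul_add]
  map_smul' c f := by ext x; simp [Rat.smul_def]; ring
lemma span_transport {X Y : Type*} (L : (X → ℝ) →ₗ[ℚ] (Y → ℝ)) (S : Set (X → ℝ))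
    (S' : Set (Y → ℝ)) (h : ∀ g ∈ S, L g ∈ Submodule.span ℚ S')
    {f : X → ℝ} (hf : f ∈ Submodule.span ℚ S) : L f ∈ Submodule.span ℚ S' :=
  (Submodule.span_le.2 h : _ ≤ (Submodule.span ℚ S').comap L) hf
lemma sum_insOrd {M : Type*} [AddCommMonoid M] (f : ℕ → M) (q t : ℕ) (ht : t ≤ q) :
    ∑ i ∈ range (q + 1), f (insOrd q t i) = ∑ i ∈ range (q + 1), f i := by
  apply Finset.sum_nbij' (i := fun k => insOrd q t k)
    (j := fun k => if k = q then t else if k < t then k else k + 1)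
  · intro a ha; simp only [mem_range] at *; unfold insOrd; split_ifs <;> omega
  · intro a ha; simp only [mem_range] at *; split_ifs <;> omega
  · intro a ha; simp only [mem_range] at ha; unfold insOrd; split_ifs <;> omega
  · intro a ha; simp only [mem_range] at ha; unfold insOrd; split_ifs <;> omega
  · intro a ha; rfl

/-- The inner recursion of the merging lemma. -/
lemma Raux (Q : ℕ)
    (hR : ∀ a b, (∀ k < Q, 1 ≤ a k) → 1 ≤ b →
      Rlhs Q a b ∈ Submodule.span ℚ (IGens Q ((∑ k ∈ range Q, a k) + b))) :
    ∀ n a a' b' g, a' + b' ≤ n → (∀ k < Q, 1 ≤ a k) →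
      (1 ≤ g ∨ (1 ≤ a' ∧ 1 ≤ b')) → 1 ≤ a' + b' →
      Rlhs' Q a a' b' g ∈
        Submodule.span ℚ (IGens (Q + 1) ((∑ k ∈ range Q, a k) + a' + b' + g)) := by
  intro n
  induction n with
  | zero => intro a a' b' g h1 _ _ h4; omega
  | succ n ih =>
    intro a a' b' g hn ha hg hab
    by_cases hb0 : b' = 0
    · -- base case `b' = 0`: the function is already a chain generator
      subst hb0
      have ha' : 1 ≤ a' := by omega
      have hg1 : 1 ≤ g := by rcases hg with h | h; exact h; omega
      set e' : ℕ → ℕ := fun k => if k < Q then a k else if k = Q then a' else g with he'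
      apply Submodule.subset_span
      refine ⟨Q + 1, e', le_rfl, ?_, ?_, ?_⟩
      · intro k hk; rw [he']; dsimp only; split_ifs with h1 h2
        · exact ha k h1
        · exact ha'
        · exact hg1
      · rw [Finset.sum_range_succ, Finset.sum_range_succ]
        have h0 : ∑ k ∈ range Q, e' k = ∑ k ∈ range Q, a k := by
          apply Finset.sum_congr rfl; intro k hk; simp only [mem_range] at hk
          rw [he']; dsimp only; rw [if_pos hk]
        have h5 : e' Q = a' := by rw [he']; dsimp only; split_ifs <;> omega
        have h6 : e' (Q + 1) = g := by rw [he']; dsimp only; split_ifs <;> omega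
        rw [h0, h5, h6]; omega
      · funext x
        have hins : ∀ i, i ≤ Q + 1 → insOrd (Q + 1) (Q + 1) i = i := by
          intro i hi; unfold insOrd; split_ifs <;> omega
        have hsum : ∀ k, k ≤ Q + 1 →
            (∑ i ∈ range (k + 1), x.1 (insOrd (Q + 1) (Q + 1) i)) = psum x k := by
          intro k hk; apply Finset.sum_congr rfl; intro i hi
          simp only [mem_range] at hi; rw [hins i (by omega)]
        have hRHS : cgen (Q + 1 + 1) (insOrd (Q + 1) (Q + 1)) e' x
            = (∏ k ∈ range Q, 1 / psum x k ^ a k) * (1 / psum x Q ^ a') *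
              (1 / (psum x Q + x.1 (Q + 1)) ^ g) := by
          unfold cgen
          rw [Finset.prod_range_succ, Finset.prod_range_succ]
          beta_reduce
          have h5 : e' Q = a' := by rw [he']; dsimp only; split_ifs <;> omega
          have h6 : e' (Q + 1) = g := by rw [he']; dsimp only; split_ifs <;> omega
          have h3 : (∏ k ∈ range Q,
              1 / (∑ i ∈ range (k + 1), x.1 (insOrd (Q + 1) (Q + 1) i)) ^ e' k)
              = ∏ k ∈ range Q, 1 / psum x k ^ a k := by
            apply Finset.prod_congr rfl; intro k hk; simp only [mem_range] at hk
            rw [hsum k (by omega), he']; dsimp only; rw [if_pos hk]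
          rw [h3, hsum Q (by omega), hsum (Q + 1) le_rfl, h5, h6]
          have h4 : psum x (Q + 1) = psum x Q + x.1 (Q + 1) := by
            rw [psum, Finset.sum_range_succ]; rfl
          rw [h4]
        rw [hRHS]
        unfold Rlhs'
        rw [pow_zero]; ring
    · by_cases ha0 : a' = 0
      · -- base case `a' = 0`: recurse on the number of variables
        subst ha0
        have hb' : 1 ≤ b' := by omega
        have hg1 : 1 ≤ g := by rcases hg with h | h; exact h; omega
        set φ : Dpos → Dpos := fun x =>
          ⟨fun j => if j < Q then x.1 j else x.1 (j + 1), by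
            intro j; dsimp only; split_ifs <;> exact x.2 _⟩ with hφ
        set W : Dpos → ℝ := fun x => 1 / (psum x Q + x.1 (Q + 1)) ^ g with hW
        have key : Rlhs' Q a 0 b' g
            = (mulLM W).comp (LinearMap.funLeft ℚ ℝ φ) (Rlhs Q a b') := by
          funext x
          show Rlhs' Q a 0 b' g x = W x * Rlhs Q a b' (φ x)
          unfold Rlhs' Rlhs
          have hps : ∀ k, k < Q → psum (φ x) k = psum x k := by
            intro k hk; unfold psum
            apply Finset.sum_congr rfl; intro i hi; simp only [mem_range] at hi
            show (if i < Q then x.1 i else x.1 (i + 1)) = x.1 i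
            rw [if_pos (by omega)]
          have hQ : (φ x).1 Q = x.1 (Q + 1) := by
            show (if Q < Q then x.1 Q else x.1 (Q + 1)) = x.1 (Q + 1)
            rw [if_neg (lt_irrefl Q)]
          rw [hQ]
          have hprod : ∏ k ∈ range Q, 1 / psum (φ x) k ^ a k
              = ∏ k ∈ range Q, 1 / psum x k ^ a k := by
            apply Finset.prod_congr rfl; intro k hk; simp only [mem_range] at hk
            rw [hps k hk]
          rw [hprod, pow_zero, hW]; ring
        rw [key]
        apply span_transport _ (IGens Q ((∑ k ∈ range Q, a k) + b'))
        · intro gen hgen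
          obtain ⟨t, e, ht, he, hesum, rfl⟩ := hgen
          apply Submodule.subset_span
          set e'' : ℕ → ℕ := fun k => if k < Q + 1 then e k else g with he''
          refine ⟨t, e'', by omega, ?_, ?_, ?_⟩
          · intro k hk; rw [he'']; dsimp only; split_ifs with h1
            · exact he k h1
            · exact hg1
          · rw [Finset.sum_range_succ]
            have h0 : ∑ k ∈ range (Q + 1), e'' k = ∑ k ∈ range (Q + 1), e k := by
              apply Finset.sum_congr rfl; intro k hk; simp only [mem_range] at hk
              rw [he'']; dsimp only; rw [if_pos hk]
            have h6 : e'' (Q + 1) = g := by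
              rw [he'']; dsimp only; rw [if_neg (by omega : ¬ Q + 1 < Q + 1)]
            rw [h0, h6, hesum]; omega
          · funext x
            show W x * cgen (Q + 1) (insOrd Q t) e (φ x)
              = cgen (Q + 1 + 1) (insOrd (Q + 1) t) e'' x
            have hval : ∀ i, i ≤ Q → (φ x).1 (insOrd Q t i) = x.1 (insOrd (Q + 1) t i) := by
              intro i hi
              show (if insOrd Q t i < Q then x.1 (insOrd Q t i) else x.1 (insOrd Q t i + 1))
                = x.1 (insOrd (Q + 1) t i)
              unfold insOrd
              split_ifs <;> first | rfl | (congr 1; omega) | omega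
            have hL : cgen (Q + 1) (insOrd Q t) e (φ x)
                = ∏ k ∈ range (Q + 1),
                    1 / (∑ i ∈ range (k + 1), x.1 (insOrd (Q + 1) t i)) ^ e k := by
              unfold cgen
              apply Finset.prod_congr rfl; intro k hk; simp only [mem_range] at hk
              have hs : (∑ i ∈ range (k + 1), (φ x).1 (insOrd Q t i))
                  = ∑ i ∈ range (k + 1), x.1 (insOrd (Q + 1) t i) :=
                Finset.sum_congr rfl (fun i hi => by
                  simp only [mem_range] at hi; exact hval i (by omega))
              rw [hs]
            have hRr : cgen (Q + 1 + 1) (insOrd (Q + 1) t) e'' x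
                = (∏ k ∈ range (Q + 1),
                    1 / (∑ i ∈ range (k + 1), x.1 (insOrd (Q + 1) t i)) ^ e k) *
                  (1 / (psum x Q + x.1 (Q + 1)) ^ g) := by
              unfold cgen
              rw [Finset.prod_range_succ]
              beta_reduce
              congr 1
              · apply Finset.prod_congr rfl; intro k hk; simp only [mem_range] at hk
                rw [he'']; dsimp only; rw [if_pos (by omega)]
              · have hss : (∑ i ∈ range (Q + 1 + 1), x.1 (insOrd (Q + 1) t i))
                    = psum x Q + x.1 (Q + 1) := by
                  rw [sum_insOrd (fun i => x.1 i) (Q + 1) t (by omega),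
                    Finset.sum_range_succ]
                  rfl
                rw [hss]
                have h6 : e'' (Q + 1) = g := by
                  rw [he'']; dsimp only; rw [if_neg (by omega : ¬ Q + 1 < Q + 1)]
                rw [h6]
            rw [hL, hRr]
            beta_reduce
            ring
        · exact hR a b' ha hb'
      · -- splitting step: `a' ≥ 1`, `b' ≥ 1`
        obtain ⟨A, rfl⟩ : ∃ A, a' = A + 1 := ⟨a' - 1, by omega⟩
        obtain ⟨B, rfl⟩ : ∃ B, b' = B + 1 := ⟨b' - 1, by omega⟩
        have key : Rlhs' Q a (A + 1) (B + 1) g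
            = Rlhs' Q a A (B + 1) (g + 1) + Rlhs' Q a (A + 1) B (g + 1) := by
          funext x
          have hX : (0:ℝ) < psum x Q := psum_pos x Q
          have hy : (0:ℝ) < x.1 (Q + 1) := x.2 _
          show Rlhs' Q a (A + 1) (B + 1) g x
            = Rlhs' Q a A (B + 1) (g + 1) x + Rlhs' Q a (A + 1) B (g + 1) x
          unfold Rlhs'
          set P := ∏ k ∈ range Q, 1 / psum x k ^ a k
          set X := psum x Q
          set y := x.1 (Q + 1)
          have hXy : (0:ℝ) < X + y := by positivity
          field_simp
          ring
        rw [key]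
        have e1 := ih a A (B + 1) (g + 1) (by omega) ha (by omega) (by omega)
        have e2 := ih a (A + 1) B (g + 1) (by omega) ha (by omega) (by omega)
        have w1 : (∑ k ∈ range Q, a k) + A + (B + 1) + (g + 1)
            = (∑ k ∈ range Q, a k) + (A + 1) + (B + 1) + g := by omega
        have w2 : (∑ k ∈ range Q, a k) + (A + 1) + B + (g + 1)
            = (∑ k ∈ range Q, a k) + (A + 1) + (B + 1) + g := by omega
        rw [w1] at e1; rw [w2] at e2
        exact Submodule.add_mem _ e1 e2

/-- The merging lemma. -/
theorem Rmain : ∀ q a b, (∀ k < q, 1 ≤ a k) → 1 ≤ b →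
    Rlhs q a b ∈ Submodule.span ℚ (IGens q ((∑ k ∈ range q, a k) + b)) := by
  intro q
  induction q with
  | zero =>
    intro a b _ hb
    apply Submodule.subset_span
    refine ⟨0, fun _ => b, le_rfl, fun k _ => hb, by simp, ?_⟩
    funext x
    show (∏ k ∈ range 0, 1 / psum x k ^ a k) * (1 / x.1 0 ^ b) = _
    unfold cgen
    simp [insOrd]
  | succ Q ih =>
    intro a b ha hb
    have key : Rlhs (Q + 1) a b = Rlhs' Q a (a Q) b 0 := by
      funext x
      unfold Rlhs Rlhs'
      rw [Finset.prod_range_succ, pow_zero]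
      ring
    rw [key]
    have := Raux Q ih (a Q + b) a (a Q) b 0 le_rfl (fun k hk => ha k (by omega))
      (Or.inr ⟨ha Q (by omega), hb⟩) (by have := ha Q (by omega); omega)
    have w : (∑ k ∈ range Q, a k) + a Q + b + 0 = (∑ k ∈ range (Q + 1), a k) + b := by
      rw [Finset.sum_range_succ]; omega
    rwa [w] at this


/-- `τ` permutes `0,…,r-1` and is the identity elsewhere. -/
def GoodPerm (r : ℕ) (τ : ℕ → ℕ) : Prop :=
  Function.Injective τ ∧ (∀ k, r ≤ k → τ k = k) ∧ (∀ k < r, τ k < r)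

lemma goodPerm_id (r : ℕ) : GoodPerm r id :=
  ⟨fun _ _ h => h, fun _ _ => rfl, fun _ hk => hk⟩

lemma insOrd_injective (q t : ℕ) (ht : t ≤ q) : Function.Injective (insOrd q t) := by
  intro i j h; unfold insOrd at h; split_ifs at h <;> omega

lemma goodPerm_comp_insOrd {r : ℕ} {τ : ℕ → ℕ} (h : GoodPerm r τ) {t : ℕ} (ht : t ≤ r) :
    GoodPerm (r + 1) (fun k => τ (insOrd r t k)) := by
  obtain ⟨hinj, hid, hlt⟩ := h
  refine ⟨hinj.comp (insOrd_injective r t ht), ?_, ?_⟩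
  · intro k hk
    have h1 : insOrd r t k = k := by unfold insOrd; split_ifs <;> omega
    show τ (insOrd r t k) = k
    rw [h1]; exact hid k (by omega)
  · intro k hk
    have h1 : insOrd r t k ≤ r := by unfold insOrd; split_ifs <;> omega
    show τ (insOrd r t k) < r + 1
    rcases Nat.lt_or_ge (insOrd r t k) r with h2 | h2
    · exact lt_trans (hlt _ h2) (by omega)
    · have h3 : insOrd r t k = r := by omega
      rw [h3, hid r le_rfl]; omega

lemma image_goodPerm {r : ℕ} {τ : ℕ → ℕ} (h : GoodPerm r τ) :
    (range r).image τ = range r := by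
  apply Finset.eq_of_subset_of_card_le
  · intro j hj; simp only [Finset.mem_image, mem_range] at *
    obtain ⟨i, hi, rfl⟩ := hj; exact h.2.2 i hi
  · rw [Finset.card_image_of_injective _ h.1]

lemma sum_goodPerm {M : Type*} [AddCommMonoid M] (f : ℕ → M) {r : ℕ} {τ : ℕ → ℕ}
    (h : GoodPerm r τ) : ∑ i ∈ range r, f (τ i) = ∑ i ∈ range r, f i := by
  have h2 : ∑ i ∈ (range r).image τ, f i = ∑ i ∈ range r, f (τ i) :=
    Finset.sum_image (fun i _ j _ hij => h.1 hij)
  rw [image_goodPerm h] at h2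
  exact h2.symm

/-- Full chain generators on `r` variables, in an arbitrary order. -/
def PGens (r W : ℕ) : Set (Dpos → ℝ) :=
  {h | ∃ τ e, GoodPerm r τ ∧ (∀ k < r, 1 ≤ e k) ∧ (∑ k ∈ range r, e k) = W ∧
    h = cgen r τ e}

theorem Pmain : ∀ r (s'' : ℕ → ℕ), (∀ j < r, 1 ≤ s'' j) →
    (fun x : Dpos => ∏ j ∈ range r, 1 / x.1 j ^ s'' j) ∈
      Submodule.span ℚ (PGens r (∑ j ∈ range r, s'' j)) := by
  intro r
  induction r with
  | zero =>
    intro s'' _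
    apply Submodule.subset_span
    exact ⟨id, s'', goodPerm_id 0, fun k hk => by omega, by simp, by
      funext x; simp [cgen]⟩
  | succ r ih =>
    intro s'' hs
    set h : Dpos → ℝ := fun x => 1 / x.1 r ^ s'' r with hh
    have key : (fun x : Dpos => ∏ j ∈ range (r + 1), 1 / x.1 j ^ s'' j)
        = mulLM h (fun x => ∏ j ∈ range r, 1 / x.1 j ^ s'' j) := by
      funext x
      show _ = h x * _
      rw [Finset.prod_range_succ, hh]; ring
    rw [key]
    apply span_transport _ (PGens r (∑ j ∈ range r, s'' j)) _ ?_
      (ih s'' (fun j hj => hs j (by omega)))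
    intro gen hgen
    obtain ⟨τ, e, hτ, he, hesum, rfl⟩ := hgen
    set ψ : Dpos → Dpos := fun x => ⟨fun j => x.1 (τ j), fun j => x.2 _⟩ with hψ
    have key2 : mulLM h (cgen r τ e) = LinearMap.funLeft ℚ ℝ ψ (Rlhs r e (s'' r)) := by
      funext x
      show h x * cgen r τ e x = Rlhs r e (s'' r) (ψ x)
      have hr : (ψ x).1 r = x.1 r := by
        show x.1 (τ r) = x.1 r; rw [hτ.2.1 r le_rfl]
      have hps : ∀ k, psum (ψ x) k = ∑ i ∈ range (k + 1), x.1 (τ i) := fun k => rfl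
      unfold Rlhs cgen
      rw [hr, hh]
      have hprod : ∏ k ∈ range r, 1 / psum (ψ x) k ^ e k
          = ∏ k ∈ range r, 1 / (∑ i ∈ range (k + 1), x.1 (τ i)) ^ e k := by
        apply Finset.prod_congr rfl; intro k _; rw [hps k]
      rw [hprod]; ring
    rw [key2]
    apply span_transport _ (IGens r ((∑ k ∈ range r, e k) + s'' r)) _ ?_
      (Rmain r e (s'' r) he (hs r (by omega)))
    intro gen2 hgen2
    obtain ⟨t, e2, ht, he2, he2sum, rfl⟩ := hgen2
    apply Submodule.subset_span
    refine ⟨fun k => τ (insOrd r t k), e2, goodPerm_comp_insOrd hτ ht, he2, ?_, ?_⟩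
    · rw [he2sum, hesum, Finset.sum_range_succ]
    · funext x
      show cgen (r + 1) (insOrd r t) e2 (ψ x) = cgen (r + 1) (fun k => τ (insOrd r t k)) e2 x
      rfl

/-- Generators for the full Mordell–Tornheim integrand. -/
def FGens (r w : ℕ) : Set (Dpos → ℝ) :=
  {h | ∃ τ e, GoodPerm r τ ∧ (∀ k < r, 1 ≤ e k) ∧ 2 ≤ e (r - 1) ∧
    (∑ k ∈ range r, e k) = w ∧ h = cgen r τ e}

theorem Fmain (R w s : ℕ) (s'' : ℕ → ℕ) (hs : 1 ≤ s)
    (hs'' : ∀ j < R + 1, 1 ≤ s'' j) (hw : (∑ j ∈ range (R + 1), s'' j) + s = w) :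
    (fun x : Dpos => (∏ j ∈ range (R + 1), 1 / x.1 j ^ s'' j) * (1 / psum x R ^ s)) ∈
      Submodule.span ℚ (FGens (R + 1) w) := by
  set L := mulLM (fun x : Dpos => 1 / psum x R ^ s) with hL
  have key : (fun x : Dpos => (∏ j ∈ range (R + 1), 1 / x.1 j ^ s'' j) *
      (1 / psum x R ^ s)) = L (fun x => ∏ j ∈ range (R + 1), 1 / x.1 j ^ s'' j) := by
    funext x; show _ = (1 / psum x R ^ s : ℝ) * (∏ j ∈ range (R + 1), 1 / x.1 j ^ s'' j); ring
  rw [key]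
  apply span_transport _ (PGens (R + 1) (∑ j ∈ range (R + 1), s'' j)) _ ?_
    (Pmain (R + 1) s'' hs'')
  intro gen hgen
  obtain ⟨τ, e, hτ, he, hesum, rfl⟩ := hgen
  apply Submodule.subset_span
  set e2 : ℕ → ℕ := fun k => if k = R then e k + s else e k with he2
  refine ⟨τ, e2, hτ, ?_, ?_, ?_, ?_⟩
  · intro k hk; rw [he2]; dsimp only; split_ifs
    · have := he k hk; omega
    · exact he k hk
  · have hx : e2 (R + 1 - 1) = e R + s := by rw [he2]; simp
    rw [hx]
    have := he R (by omega); omega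
  · rw [Finset.sum_range_succ]
    have h0 : ∑ k ∈ range R, e2 k = ∑ k ∈ range R, e k := by
      apply Finset.sum_congr rfl; intro k hk; simp only [mem_range] at hk
      rw [he2]; dsimp only; rw [if_neg (by omega)]
    have h1 : e2 R = e R + s := by rw [he2]; dsimp only; rw [if_pos rfl]
    rw [h0, h1]
    rw [Finset.sum_range_succ, Finset.sum_range_succ] at hesum
    rw [Finset.sum_range_succ] at hw
    omega
  · funext x
    show (1 / psum x R ^ s) * cgen (R + 1) τ e x = cgen (R + 1) τ e2 x
    unfold cgen
    rw [Finset.prod_range_succ, Finset.prod_range_succ]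
    beta_reduce
    have h1 : e2 R = e R + s := by rw [he2]; dsimp only; rw [if_pos rfl]
    have h0 : ∏ k ∈ range R, 1 / (∑ i ∈ range (k + 1), x.1 (τ i)) ^ e2 k
        = ∏ k ∈ range R, 1 / (∑ i ∈ range (k + 1), x.1 (τ i)) ^ e k := by
      apply Finset.prod_congr rfl; intro k hk; simp only [mem_range] at hk
      rw [he2]; dsimp only; rw [if_neg (by omega)]
    have h2 : (∑ i ∈ range (R + 1), x.1 (τ i)) = psum x R :=
      sum_goodPerm (fun i => x.1 i) hτ
    rw [h0, h1, h2, pow_add]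
    have : (0:ℝ) < psum x R := psum_pos x R
    field_simp



/-! ### The arithmetic level -/

abbrev Mtype (r : ℕ) := {m : Fin r → ℕ // ∀ j, 0 < m j}
abbrev Ctype (r : ℕ) :=
  {n : Fin r → ℕ // (∀ j, 0 < n j) ∧ ∀ i j : Fin r, i < j → n j < n i}

/-- `m` as an `ℕ`-indexed family, padded by `1`. -/
def mnat {r : ℕ} (m : Mtype r) : ℕ → ℕ := fun j => if h : j < r then m.1 ⟨j, h⟩ else 1

lemma one_le_mnat {r : ℕ} (m : Mtype r) (j : ℕ) : 1 ≤ mnat m j := by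
  unfold mnat; split_ifs with h
  · exact m.2 _
  · exact le_refl 1

lemma mnat_fin {r : ℕ} (m : Mtype r) (j : Fin r) : mnat m (j : ℕ) = m.1 j := by
  unfold mnat; rw [dif_pos j.2]

/-- The real positive sequence attached to `m`. -/
def nu {r : ℕ} (m : Mtype r) : Dpos :=
  ⟨fun j => (mnat m j : ℝ), fun j => by
    have h := one_le_mnat m j
    show (0:ℝ) < (mnat m j : ℝ)
    exact_mod_cast Nat.lt_of_lt_of_le Nat.zero_lt_one h⟩

lemma prod_goodPerm {M : Type*} [CommMonoid M] (f : ℕ → M) {r : ℕ} {τ : ℕ → ℕ}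
    (h : GoodPerm r τ) : ∏ i ∈ range r, f (τ i) = ∏ i ∈ range r, f i := by
  have h2 : ∏ i ∈ (range r).image τ, f i = ∏ i ∈ range r, f (τ i) :=
    Finset.prod_image (fun i _ j _ hij => h.1 hij)
  rw [image_goodPerm h] at h2
  exact h2.symm

/-- The strictly decreasing chain of partial sums attached to `m` (in the order `τ`). -/
def PhiFun {r : ℕ} (τ : ℕ → ℕ) (m : Mtype r) : Fin r → ℕ :=
  fun j => ∑ i ∈ range (r - (j : ℕ)), mnat m (τ i)

lemma PhiFun_pos {r : ℕ} (τ : ℕ → ℕ) (m : Mtype r) (j : Fin r) : 0 < PhiFun τ m j := by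
  apply Finset.sum_pos (fun i _ => one_le_mnat m (τ i))
  have := j.2
  simp only [Finset.nonempty_range_iff]
  omega

lemma PhiFun_anti {r : ℕ} (τ : ℕ → ℕ) (m : Mtype r) (i j : Fin r) (hij : i < j) :
    PhiFun τ m j < PhiFun τ m i := by
  unfold PhiFun
  have h1 : (i : ℕ) < j := hij
  have h2 : r - (j : ℕ) < r - (i : ℕ) := by have := j.2; omega
  apply Finset.sum_lt_sum_of_subset (i := r - (j : ℕ))
  · intro u hu; simp only [mem_range] at *; omega
  · simp only [mem_range]; omega
  · simp only [mem_range]; omega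
  · exact one_le_mnat m _
  · intro u _ _; exact Nat.zero_le _

def Phi {r : ℕ} (τ : ℕ → ℕ) (m : Mtype r) : Ctype r :=
  ⟨PhiFun τ m, fun j => PhiFun_pos τ m j, fun i j h => PhiFun_anti τ m i j h⟩

/-- Partial sums in `ℕ`. -/
def pnat {r : ℕ} (m : Mtype r) (τ : ℕ → ℕ) (k : ℕ) : ℕ :=
  ∑ i ∈ range (k + 1), mnat m (τ i)

lemma Phi_inj {r : ℕ} {τ : ℕ → ℕ} (hτ : GoodPerm r τ) :
    Function.Injective (Phi (r := r) τ) := by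
  intro m m' h
  have hP : ∀ k < r, pnat m τ k = pnat m' τ k := by
    intro k hk
    have h0 := congrFun (congrArg Subtype.val h) ⟨r - 1 - k, by omega⟩
    have harg : r - (r - 1 - k) = k + 1 := by omega
    unfold Phi PhiFun at h0
    simp only at h0
    rw [harg] at h0
    exact h0
  have hterm : ∀ i < r, mnat m (τ i) = mnat m' (τ i) := by
    intro i hi
    cases i with
    | zero =>
      have h0 := hP 0 hi
      unfold pnat at h0
      simpa using h0
    | succ i' =>
      have h1 := hP (i' + 1) hi
      have h2 := hP i' (by omega)
      have e1 : pnat m τ (i' + 1) = pnat m τ i' + mnat m (τ (i' + 1)) := by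
        unfold pnat; rw [Finset.sum_range_succ]
      have e2 : pnat m' τ (i' + 1) = pnat m' τ i' + mnat m' (τ (i' + 1)) := by
        unfold pnat; rw [Finset.sum_range_succ]
      omega
  apply Subtype.ext; funext j
  have hj : (j : ℕ) ∈ (range r).image τ := by rw [image_goodPerm hτ]; simp [j.2]
  obtain ⟨i, hi, hτi⟩ := Finset.mem_image.1 hj
  simp only [mem_range] at hi
  have h3 := hterm i hi
  rw [hτi] at h3
  rw [mnat_fin m j, mnat_fin m' j] at h3
  exact h3

lemma Phi_surj {r : ℕ} {τ : ℕ → ℕ} (hr : 0 < r) (hτ : GoodPerm r τ) :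
    Function.Surjective (Phi (r := r) τ) := by
  intro n
  set npad : ℕ → ℕ := fun j => if h : j < r then n.1 ⟨j, h⟩ else 0 with hnpad
  have hmono : ∀ K < r, npad (r - K) < npad (r - 1 - K) := by
    intro K hK
    have h1 : r - 1 - K < r := by omega
    by_cases h2 : K = 0
    · subst h2
      have e1 : npad (r - 0) = 0 := by rw [hnpad]; dsimp only; rw [dif_neg (by omega)]
      have e2 : 0 < npad (r - 1 - 0) := by
        rw [hnpad]; dsimp only; rw [dif_pos h1]; exact n.2.1 _
      omega
    · have h3 : r - K < r := by omega
      have e1 : npad (r - K) = n.1 ⟨r - K, h3⟩ := by rw [hnpad]; dsimp only; rw [dif_pos h3]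
      have e2 : npad (r - 1 - K) = n.1 ⟨r - 1 - K, h1⟩ := by
        rw [hnpad]; dsimp only; rw [dif_pos h1]
      rw [e1, e2]
      exact n.2.2 ⟨r - 1 - K, h1⟩ ⟨r - K, h3⟩ (by simp [Fin.lt_def]; omega)
  set δ : ℕ → ℕ := fun i => npad (r - 1 - i) - npad (r - i) with hδ
  have hδpos : ∀ i < r, 0 < δ i := by
    intro i hi; rw [hδ]; dsimp only
    have := hmono i hi; omega
  have htel : ∀ K, K ≤ r → ∑ i ∈ range K, δ i = npad (r - K) := by
    intro K
    induction K with
    | zero =>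
      intro _
      have e1 : npad (r - 0) = 0 := by rw [hnpad]; dsimp only; rw [dif_neg (by omega)]
      rw [Finset.sum_range_zero]
      exact e1.symm
    | succ K ih =>
      intro hK
      rw [Finset.sum_range_succ, ih (by omega)]
      have h4 := hmono K (by omega)
      have harg : r - (K + 1) = r - 1 - K := by omega
      rw [harg, hδ]; dsimp only
      omega
  have hInv : ∀ i, Function.invFun τ (τ i) = i := Function.leftInverse_invFun hτ.1
  have hsurjr : ∀ j : Fin r, ∃ i < r, τ i = (j : ℕ) := by
    intro j
    have hj : (j : ℕ) ∈ (range r).image τ := by rw [image_goodPerm hτ]; simp [j.2]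
    obtain ⟨i, hi, hτi⟩ := Finset.mem_image.1 hj
    exact ⟨i, Finset.mem_range.1 hi, hτi⟩
  set m : Fin r → ℕ := fun j => δ (Function.invFun τ (j : ℕ)) with hm
  have hmval : ∀ i, i < r → ∀ (h : τ i < r), m ⟨τ i, h⟩ = δ i := by
    intro i hi h
    rw [hm]; dsimp only
    rw [hInv i]
  have hmpos : ∀ j, 0 < m j := by
    intro j
    obtain ⟨i, hi, hτi⟩ := hsurjr j
    have h5 : m j = δ i := by
      rw [hm]; dsimp only; rw [← hτi, hInv i]
    rw [h5]; exact hδpos i hi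
  refine ⟨⟨m, hmpos⟩, ?_⟩
  apply Subtype.ext; funext j
  show PhiFun τ ⟨m, hmpos⟩ j = n.1 j
  unfold PhiFun
  have hterm : ∀ i ∈ range (r - (j : ℕ)), mnat ⟨m, hmpos⟩ (τ i) = δ i := by
    intro i hi
    simp only [mem_range] at hi
    have hir : i < r := by omega
    have hlt : τ i < r := hτ.2.2 i hir
    unfold mnat
    rw [dif_pos hlt]
    exact hmval i hir hlt
  rw [Finset.sum_congr rfl hterm, htel (r - (j : ℕ)) (by omega)]
  have harg : r - (r - (j : ℕ)) = (j : ℕ) := by have := j.2; omega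
  rw [harg, hnpad]; dsimp only
  rw [dif_pos j.2]



lemma MZVterm_Phi {r : ℕ} {τ : ℕ → ℕ} (e : ℕ → ℕ) (m : Mtype r) :
    MZVterm r (fun j => e (r - 1 - (j : ℕ))) (Phi τ m) = cgen r τ e (nu m) := by
  set F : ℕ → ℝ :=
    fun u => 1 / ((∑ i ∈ range (r - u), mnat m (τ i) : ℕ) : ℝ) ^ e (r - 1 - u) with hF
  have h0 : MZVterm r (fun j => e (r - 1 - (j : ℕ))) (Phi τ m) = ∏ j : Fin r, F (j : ℕ) := by
    unfold MZVterm
    apply Finset.prod_congr rfl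
    intro j _
    rfl
  rw [h0, Fin.prod_univ_eq_prod_range F r, ← Finset.prod_range_reflect F r]
  unfold cgen
  apply Finset.prod_congr rfl
  intro k hk
  simp only [mem_range] at hk
  rw [hF]
  have h1 : r - (r - 1 - k) = k + 1 := by omega
  have h2 : r - 1 - (r - 1 - k) = k := by omega
  dsimp only
  rw [h1, h2, Nat.cast_sum]
  rfl

set_option maxHeartbeats 1000000 in
lemma tsum_cgen {r : ℕ} {τ : ℕ → ℕ} (hr : 0 < r) (hτ : GoodPerm r τ) (e : ℕ → ℕ) :
    MZV r (fun j => e (r - 1 - (j : ℕ))) = ∑' m : Mtype r, cgen r τ e (nu m) := by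
  unfold MZV
  have h1 : ∑' (n : Ctype r), MZVterm r (fun j => e (r - 1 - (j : ℕ))) n
      = ∑' m : Mtype r, MZVterm r (fun j => e (r - 1 - (j : ℕ))) (Phi τ m) :=
    (Equiv.tsum_eq (Equiv.ofBijective (Phi τ) ⟨Phi_inj hτ, Phi_surj hr hτ⟩)
      (MZVterm r (fun j => e (r - 1 - (j : ℕ))))).symm
  rw [h1]
  apply tsum_congr
  intro m
  exact MZVterm_Phi e m

lemma summable_pi (d : ℕ) (p : ℝ) (hp : 1 < p) :
    Summable (fun f : Fin d → ℕ => ∏ j, ((f j : ℝ) ^ p)⁻¹) := by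
  induction d with
  | zero =>
    have h : (fun f : Fin 0 → ℕ => ∏ j, ((f j : ℝ) ^ p)⁻¹) = fun _ => (1 : ℝ) := by
      funext f; simp
    rw [h]
    exact (hasSum_single (f := fun _ : Fin 0 → ℕ => (1 : ℝ)) default
      (fun b hb => absurd (Subsingleton.elim b default) hb)).summable
  | succ d ih =>
    have hℕ : Summable (fun n : ℕ => ((n : ℝ) ^ p)⁻¹) := Real.summable_nat_rpow_inv.2 hp
    have hmul := hℕ.mul_of_nonneg ih (fun n => by positivity) (fun f => by positivity)
    set E := Fin.consEquiv (fun _ : Fin (d + 1) => ℕ) with hE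
    rw [← Equiv.summable_iff E]
    apply (summable_congr ?_).2 hmul
    intro x
    show ∏ j, (((E x) j : ℝ) ^ p)⁻¹
      = ((x.1 : ℝ) ^ p)⁻¹ * ∏ j, ((x.2 j : ℝ) ^ p)⁻¹
    obtain ⟨a, g⟩ := x
    have hEx : E (a, g) = Fin.cons a g := rfl
    rw [hEx, Fin.prod_univ_succ, Fin.cons_zero]
    simp [Fin.cons_succ]

lemma cgen_nonneg (q : ℕ) (τ e : ℕ → ℕ) (x : Dpos) : 0 ≤ cgen q τ e x := by
  apply Finset.prod_nonneg
  intro k _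
  exact div_nonneg zero_le_one (pow_nonneg (chain_pos x τ k).le _)

lemma cgen_le {R : ℕ} {τ e : ℕ → ℕ} (hτ : GoodPerm (R + 1) τ)
    (he : ∀ k < R + 1, 1 ≤ e k) (he2 : 2 ≤ e R) (m : Mtype (R + 1)) :
    cgen (R + 1) τ e (nu m)
      ≤ ∏ j : Fin (R + 1), ((m.1 j : ℝ) ^ (1 + ((R : ℝ) + 1)⁻¹))⁻¹ := by
  set c : ℝ := ((R : ℝ) + 1)⁻¹ with hc
  have hc0 : 0 ≤ c := by positivity
  set C : ℕ → ℝ := fun k => ∑ i ∈ range (k + 1), (mnat m (τ i) : ℝ) with hC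
  have hterm1 : ∀ i, (1 : ℝ) ≤ (mnat m (τ i) : ℝ) := by
    intro i; exact_mod_cast one_le_mnat m (τ i)
  have hC1 : ∀ k, 1 ≤ C k := by
    intro k
    calc (1 : ℝ) ≤ (mnat m (τ 0) : ℝ) := hterm1 0
    _ ≤ C k := Finset.single_le_sum (f := fun i => (mnat m (τ i) : ℝ))
        (fun i _ => by positivity) (by simp)
  have hCpos : ∀ k, (0 : ℝ) < C k := fun k => lt_of_lt_of_le one_pos (hC1 k)
  have hCge : ∀ k, (mnat m (τ k) : ℝ) ≤ C k := by
    intro k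
    exact Finset.single_le_sum (f := fun i => (mnat m (τ i) : ℝ))
      (fun i _ => by positivity) (by simp)
  have hterm1' : ∀ k, (1 : ℝ) ≤ (mnat m k : ℝ) := by
    intro k; exact_mod_cast one_le_mnat m k
  set P : ℝ := ∏ k ∈ range (R + 1), (mnat m k : ℝ) with hP
  have hPpos : 0 < P :=
    Finset.prod_pos (fun k _ => lt_of_lt_of_le one_pos (hterm1' k))
  set Nval : ℝ := ∑ i ∈ range (R + 1), (mnat m i : ℝ) with hN
  have hCtop : C R = Nval := sum_goodPerm (fun i => (mnat m i : ℝ)) hτ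
  have hNpos : 0 < Nval := by rw [← hCtop]; exact hCpos R
  -- step 1: enlarge the exponents
  have step1 : cgen (R + 1) τ e (nu m)
      ≤ (∏ k ∈ range (R + 1), (C k)⁻¹) * (C R)⁻¹ := by
    have h1 : cgen (R + 1) τ e (nu m)
        ≤ ∏ k ∈ range (R + 1), 1 / (C k) ^ (if k = R then 2 else 1) := by
      unfold cgen
      apply Finset.prod_le_prod
      · intro k _
        exact div_nonneg zero_le_one (pow_nonneg (chain_pos (nu m) τ k).le _)
      · intro k hk
        simp only [mem_range] at hk
        have hke : (if k = R then 2 else 1) ≤ e k := by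
          split_ifs with h
          · subst h; exact he2
          · exact he k hk
        have hbase : (C k) ^ (if k = R then 2 else 1) ≤ (C k) ^ e k :=
          pow_le_pow_right₀ (hC1 k) hke
        have hcg : (∑ i ∈ range (k + 1), (nu m).1 (τ i)) = C k := rfl
        rw [hcg]
        apply one_div_le_one_div_of_le (pow_pos (hCpos k) _) hbase
    refine le_trans h1 (le_of_eq ?_)
    rw [Finset.prod_range_succ, Finset.prod_range_succ]
    have h2 : ∏ k ∈ range R, 1 / (C k) ^ (if k = R then 2 else 1)
        = ∏ k ∈ range R, (C k)⁻¹ := by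
      apply Finset.prod_congr rfl; intro k hk; simp only [mem_range] at hk
      rw [if_neg (by omega), pow_one, one_div]
    rw [h2, if_pos rfl, pow_two, one_div, mul_inv]
    ring
  -- step 2: chain values dominate individual variables
  have step2 : ∏ k ∈ range (R + 1), (C k)⁻¹ ≤ P⁻¹ := by
    have h1 : ∏ k ∈ range (R + 1), (C k)⁻¹
        ≤ ∏ k ∈ range (R + 1), ((mnat m (τ k) : ℝ))⁻¹ := by
      apply Finset.prod_le_prod
      · intro k _; positivity
      · intro k _
        exact inv_anti₀ (lt_of_lt_of_le one_pos (hterm1 k)) (hCge k)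
    have h2 : ∏ k ∈ range (R + 1), ((mnat m (τ k) : ℝ))⁻¹
        = ∏ k ∈ range (R + 1), ((mnat m k : ℝ))⁻¹ :=
      prod_goodPerm (fun i => ((mnat m i : ℝ))⁻¹) hτ
    calc ∏ k ∈ range (R + 1), (C k)⁻¹
        ≤ ∏ k ∈ range (R + 1), ((mnat m (τ k) : ℝ))⁻¹ := h1
    _ = ∏ k ∈ range (R + 1), ((mnat m k : ℝ))⁻¹ := h2
    _ = P⁻¹ := Finset.prod_inv_distrib _
  -- step 3: the total sum dominates the geometric mean
  have step3 : (C R)⁻¹ ≤ (P ^ c)⁻¹ := by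
    have h1 : ∀ k ∈ range (R + 1), (mnat m k : ℝ) ≤ Nval := by
      intro k hk
      exact Finset.single_le_sum (f := fun i => (mnat m i : ℝ))
        (fun i _ => by positivity) hk
    have h2 : P ≤ Nval ^ (R + 1) := by
      calc P ≤ ∏ _k ∈ range (R + 1), Nval :=
        Finset.prod_le_prod (fun k _ => by positivity) h1
      _ = Nval ^ (R + 1) := by rw [Finset.prod_const, Finset.card_range]
    have h3 : P ^ c ≤ Nval := by
      calc P ^ c ≤ (Nval ^ (R + 1)) ^ c :=
        Real.rpow_le_rpow hPpos.le h2 hc0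
      _ = Nval := by
        rw [← Real.rpow_natCast Nval (R + 1), ← Real.rpow_mul hNpos.le]
        rw [hc]
        push_cast
        rw [mul_inv_cancel₀ (by positivity : ((R : ℝ) + 1) ≠ 0), Real.rpow_one]
    rw [hCtop]
    exact inv_anti₀ (Real.rpow_pos_of_pos hPpos c) h3
  -- combine
  have hcomb : cgen (R + 1) τ e (nu m) ≤ P⁻¹ * (P ^ c)⁻¹ := by
    calc cgen (R + 1) τ e (nu m)
        ≤ (∏ k ∈ range (R + 1), (C k)⁻¹) * (C R)⁻¹ := step1
    _ ≤ P⁻¹ * (P ^ c)⁻¹ := by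
        apply mul_le_mul step2 step3 (by positivity)
        positivity
  refine le_trans hcomb (le_of_eq ?_)
  -- final algebraic identification
  have hPfin : ∏ j : Fin (R + 1), (m.1 j : ℝ) = P := by
    rw [hP, ← Fin.prod_univ_eq_prod_range (fun k => (mnat m k : ℝ)) (R + 1)]
    apply Finset.prod_congr rfl
    intro j _
    rw [mnat_fin]
  have hmpos : ∀ j : Fin (R + 1), (0 : ℝ) < (m.1 j : ℝ) := by
    intro j; exact_mod_cast m.2 j
  have hexp : ∀ j : Fin (R + 1), ((m.1 j : ℝ)) ^ (1 + c)
      = (m.1 j : ℝ) * ((m.1 j : ℝ)) ^ c := by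
    intro j
    rw [Real.rpow_add (hmpos j), Real.rpow_one]
  calc P⁻¹ * (P ^ c)⁻¹ = (P * P ^ c)⁻¹ := by rw [mul_inv]
  _ = ∏ j : Fin (R + 1), ((m.1 j : ℝ) ^ (1 + c))⁻¹ := by
      rw [Finset.prod_inv_distrib]
      congr 1
      rw [← hPfin, ← Real.finset_prod_rpow _ _ (fun j _ => (hmpos j).le) c,
        ← Finset.prod_mul_distrib]
      apply Finset.prod_congr rfl
      intro j _
      rw [hexp j]



lemma summable_cgen {R : ℕ} {τ e : ℕ → ℕ} (hτ : GoodPerm (R + 1) τ)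
    (he : ∀ k < R + 1, 1 ≤ e k) (he2 : 2 ≤ e R) :
    Summable (fun m : Mtype (R + 1) => cgen (R + 1) τ e (nu m)) := by
  set p : ℝ := 1 + ((R : ℝ) + 1)⁻¹ with hp'
  have hp : 1 < p := by
    rw [hp']
    have : (0:ℝ) < ((R : ℝ) + 1)⁻¹ := by positivity
    linarith
  have h1 : Summable (fun f : Fin (R + 1) → ℕ => ∏ j, ((f j : ℝ) ^ p)⁻¹) :=
    summable_pi (R + 1) p hp
  have h2 := h1.subtype {m : Fin (R + 1) → ℕ | ∀ j, 0 < m j}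
  apply Summable.of_nonneg_of_le (fun m => cgen_nonneg _ _ _ _)
    (fun m => cgen_le hτ he he2 m)
  exact h2

/-- The submodule of functions that are summable with sum lying in `T`. -/
def Wsub {X : Type*} (T : Submodule ℚ ℝ) : Submodule ℚ (X → ℝ) where
  carrier := {f | Summable f ∧ (∑' x, f x) ∈ T}
  add_mem' := by
    intro f g hf hg
    exact ⟨hf.1.add hg.1, by
      simp only [Pi.add_apply]
      rw [Summable.tsum_add hf.1 hg.1]; exact T.add_mem hf.2 hg.2⟩
  zero_mem' := ⟨summable_zero, by
    simp only [Pi.zero_apply]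
    rw [tsum_zero]; exact T.zero_mem⟩
  smul_mem' := by
    intro c f hf
    have h1 : (c • f) = fun x => (c : ℝ) * f x := by
      funext x; simp [Rat.smul_def]
    refine ⟨?_, ?_⟩
    · rw [h1]; exact hf.1.mul_left _
    · rw [h1, tsum_mul_left]
      have h2 : (c : ℝ) * ∑' x, f x = c • (∑' x, f x) := (Rat.smul_def _ _).symm
      rw [h2]
      exact T.smul_mem c hf.2

theorem mt_mem_span_mzv' (r w : ℕ) (hr : 0 < r) (s' : Fin r → ℕ) (s : ℕ)
    (hs' : ∀ j, 0 < s' j) (hs : 0 < s) (hw : (∑ j, s' j) + s = w) :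
    MT r s' s ∈ Submodule.span ℚ
      {z : ℝ | ∃ t : Fin r → ℕ, (∀ j, 0 < t j) ∧ 2 ≤ t ⟨0, hr⟩ ∧ (∑ j, t j) = w ∧
        z = MZV r t} := by
  obtain ⟨R, rfl⟩ : ∃ R, r = R + 1 := ⟨r - 1, by omega⟩
  set T := Submodule.span ℚ
    {z : ℝ | ∃ t : Fin (R + 1) → ℕ, (∀ j, 0 < t j) ∧ 2 ≤ t ⟨0, hr⟩ ∧ (∑ j, t j) = w ∧
      z = MZV (R + 1) t} with hT
  show MT (R + 1) s' s ∈ T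
  set s'' : ℕ → ℕ := fun j => if h : j < R + 1 then s' ⟨j, h⟩ else 1 with hs''
  have hs''pos : ∀ j < R + 1, 1 ≤ s'' j := by
    intro j hj; rw [hs'']; dsimp only; rw [dif_pos hj]; exact hs' _
  have hsum'' : ∑ j ∈ range (R + 1), s'' j = ∑ j, s' j := by
    rw [← Fin.sum_univ_eq_sum_range (fun j => s'' j) (R + 1)]
    apply Finset.sum_congr rfl
    intro j _
    rw [hs'']; dsimp only; rw [dif_pos j.2]
  have hw' : (∑ j ∈ range (R + 1), s'' j) + s = w := by rw [hsum'']; exact hw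
  have hMT : MTterm (R + 1) s' s = LinearMap.funLeft ℚ ℝ nu
      (fun x : Dpos => (∏ j ∈ range (R + 1), 1 / x.1 j ^ s'' j) * (1 / psum x R ^ s)) := by
    funext m
    show MTterm (R + 1) s' s m
      = (∏ j ∈ range (R + 1), 1 / (nu m).1 j ^ s'' j) * (1 / psum (nu m) R ^ s)
    unfold MTterm
    have hA : ∏ j ∈ range (R + 1), 1 / (nu m).1 j ^ s'' j
        = ∏ j : Fin (R + 1), 1 / (m.1 j : ℝ) ^ s' j := by
      rw [← Fin.prod_univ_eq_prod_range (fun j => 1 / (nu m).1 j ^ s'' j) (R + 1)]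
      apply Finset.prod_congr rfl
      intro j _
      have h1 : (nu m).1 (j : ℕ) = (m.1 j : ℝ) := by
        show ((mnat m (j : ℕ) : ℕ) : ℝ) = _
        rw [mnat_fin]
      have h2 : s'' (j : ℕ) = s' j := by rw [hs'']; dsimp only; rw [dif_pos j.2]
      rw [h1, h2]
    have hB : psum (nu m) R = ((∑ j, m.1 j : ℕ) : ℝ) := by
      show (∑ i ∈ range (R + 1), ((mnat m i : ℕ) : ℝ)) = _
      rw [Nat.cast_sum]
      rw [← Fin.sum_univ_eq_sum_range (fun i => ((mnat m i : ℕ) : ℝ)) (R + 1)]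
      apply Finset.sum_congr rfl
      intro j _
      rw [mnat_fin]
    rw [hA, hB]
    simp only [one_div]
    rw [mul_inv]
    congr 1
    exact (Finset.prod_inv_distrib _).symm
  have hFm := Fmain R w s s'' hs hs''pos hw'
  have hsub : ∀ gen ∈ FGens (R + 1) w,
      LinearMap.funLeft ℚ ℝ nu gen ∈ (Wsub (X := Mtype (R + 1)) T) := by
    intro gen hgen
    obtain ⟨τ, e, hτ, he, he2, hesum, rfl⟩ := hgen
    have he2' : 2 ≤ e R := by simpa using he2
    refine ⟨summable_cgen hτ he he2', ?_⟩
    have ht := tsum_cgen (by omega : 0 < R + 1) hτ e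
    show (∑' m : Mtype (R + 1), cgen (R + 1) τ e (nu m)) ∈ T
    rw [← ht, hT]
    apply Submodule.subset_span
    refine ⟨fun j => e (R + 1 - 1 - (j : ℕ)), ?_, ?_, ?_, rfl⟩
    · intro j
      show 0 < e (R + 1 - 1 - (j : ℕ))
      have := he (R + 1 - 1 - (j : ℕ)) (by omega)
      omega
    · show 2 ≤ e (R + 1 - 1 - ((⟨0, hr⟩ : Fin (R + 1)) : ℕ))
      have h0 : R + 1 - 1 - ((⟨0, hr⟩ : Fin (R + 1)) : ℕ) = R := rfl
      rw [h0]
      exact he2'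
    · rw [Fin.sum_univ_eq_sum_range (fun j => e (R + 1 - 1 - j)) (R + 1)]
      rw [Finset.sum_range_reflect e (R + 1)]
      exact hesum
  have hle : Submodule.span ℚ (FGens (R + 1) w)
      ≤ (Wsub (X := Mtype (R + 1)) T).comap (LinearMap.funLeft ℚ ℝ nu) :=
    Submodule.span_le.2 hsub
  have hmem2 : (LinearMap.funLeft ℚ ℝ nu)
      (fun x => (∏ j ∈ range (R + 1), 1 / x.1 j ^ s'' j) * (1 / psum x R ^ s))
      ∈ Wsub (X := Mtype (R + 1)) T := Submodule.mem_comap.1 (hle hFm)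
  rw [← hMT] at hmem2
  exact hmem2.2


end MTaux

/-- **Theorem (Mordell–Tornheim values are ℚ-linear combinations of MZVs).**
If `s_1, …, s_r, s` are positive integers of total weight `w` whose Mordell–Tornheim
series converges absolutely, then `T(s_1, …, s_r; s)` lies in the ℚ-linear span of the
multiple zeta values of depth `r` and weight `w` (with first argument at least 2). -/
theorem mt_mem_span_mzv (r w : ℕ) (hr : 0 < r) (s' : Fin r → ℕ) (s : ℕ)
    (hs' : ∀ j, 0 < s' j) (hs : 0 < s) (hw : (∑ j, s' j) + s = w)
    (hconv : Summable (MTterm r s' s)) :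
    MT r s' s ∈ Submodule.span ℚ
      {z : ℝ | ∃ t : Fin r → ℕ, (∀ j, 0 < t j) ∧ 2 ≤ t ⟨0, hr⟩ ∧ (∑ j, t j) = w ∧
        z = MZV r t} :=
  mt_mem_span_mzv' r w hr s' s hs' hs hw
end

section
/- Let r be a positive integer, 1 ≤ l ≤ r−1, and s_1, ..., s_r positive integers such that the relevant series converge absolutely. Then T_l(s_1, ..., s_r) = ∑_{j=1}^l ∑_{(a_k)_{1≤k≤l, k≠j}, 0 ≤ a_k ≤ s_k − 1} M_j · T_{l−1}(s_1 − a_1, ..., ŝ_j, ..., s_l − a_l, s_j + A_j, s_{l+1}, ..., s_r), where the hat denotes omission of the j-th entry among the first l arguments, A_j := ∑_{1≤k≤l, k≠j} a_k, and M_j := (s_j + A_j − 1)! / ((s_j − 1)! · ∏_{1≤k≤l, k≠j} a_k!). -/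
open Finset

/-- index set for `a` in the partial fraction identity -/
def Pset (w : ℕ) (s : Fin (w+1) → ℕ) (j : Fin (w+1)) : Finset (Fin (w+1) → ℕ) :=
  Fintype.piFinset (fun k => Finset.range (if k = j then 1 else s k))

noncomputable def plainTerm (w : ℕ) (s : Fin (w+1) → ℕ) (m : Fin (w+1) → ℝ)
    (j : Fin (w+1)) (a : Fin (w+1) → ℕ) : ℝ :=
  1 / (∑ k, m k) ^ (s j + ∑ k, a k) * ∏ k ∈ Finset.univ.erase j, 1 / m k ^ (s k - a k)

noncomputable def Mcoef (w : ℕ) (b : ℕ) (a : Fin (w+1) → ℕ) : ℝ :=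
  ((b - 1 + ∑ k, a k).factorial : ℝ) / ((b-1).factorial * ∏ k, ((a k).factorial : ℝ))

noncomputable def ratio (w : ℕ) (s : Fin (w+1) → ℕ) (d j : Fin (w+1)) (a : Fin (w+1) → ℕ) : ℝ :=
  ((((s j - 1 + ∑ k, a k) - 1).factorial * (if d = j then s j - 1 else a d) : ℕ) : ℝ) /
    ((s j - 1).factorial * ∏ k, ((a k).factorial : ℝ))

lemma mem_Pset {w : ℕ} {s : Fin (w+1) → ℕ} {j : Fin (w+1)} {a : Fin (w+1) → ℕ}
    (ha : a ∈ Pset w s j) : a j = 0 ∧ ∀ k, k ≠ j → a k < s k := by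
  rw [Pset, Fintype.mem_piFinset] at ha
  constructor
  · have := ha j; simp at this; omega
  · intro k hk; have := ha k; rw [Finset.mem_range, if_neg hk] at this; exact this

lemma coef_id (w : ℕ) (s : Fin (w+1) → ℕ) (hs : ∀ k, 0 < s k) (j : Fin (w+1))
    (a : Fin (w+1) → ℕ) (ha : a ∈ Pset w s j) :
    Mcoef w (s j) a = ∑ d, ratio w s d j a
      + (if s j - 1 + ∑ k, a k = 0 then 1 else 0) := by
  obtain ⟨haj, -⟩ := mem_Pset ha
  have hsum : ∑ d, (if d = j then s j - 1 else a d) = s j - 1 + ∑ k, a k := by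
    have h1 : ∑ d, (if d = j then s j - 1 else a d)
        = ∑ d, (a d + (if d = j then s j - 1 else 0)) := by
      apply Finset.sum_congr rfl
      intro d _
      by_cases hd : d = j <;> simp [hd, haj]
    rw [h1, Finset.sum_add_distrib, Finset.sum_ite_eq' Finset.univ j (fun _ => s j - 1)]
    simp [add_comm]
  unfold Mcoef ratio
  rw [← Finset.sum_div, ← Nat.cast_sum, ← Finset.mul_sum, hsum]
  rcases Nat.eq_zero_or_pos (s j - 1 + ∑ k, a k) with h0 | hpos
  · have hj1 : s j = 1 := by have := hs j; omega
    have haz : ∀ k, a k = 0 := by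
      intro k
      have : ∑ k, a k = 0 := by omega
      exact Finset.sum_eq_zero_iff.mp this k (Finset.mem_univ k)
    simp [h0, hj1, haz, Nat.factorial]
  · rw [if_neg (by omega)]
    rw [show ((s j - 1 + ∑ k, a k) - 1).factorial * (s j - 1 + ∑ k, a k)
        = (s j - 1 + ∑ k, a k).factorial from by
      rw [mul_comm]; exact Nat.mul_factorial_pred hpos.ne']
    rw [add_zero]

lemma step1 (w : ℕ) (s : Fin (w+1) → ℕ) (hs : ∀ k, 0 < s k) (m : Fin (w+1) → ℝ)
    (hm : ∀ k, 0 < m k) :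
    ∏ k, 1 / m k ^ s k
      = ∑ d, (1 / (∑ k, m k)) * ∏ k, 1 / m k ^ (if k = d then s k - 1 else s k) := by
  have hn : (0:ℝ) < ∑ k, m k := Finset.sum_pos (fun k _ => hm k) Finset.univ_nonempty
  have key : ∀ d : Fin (w+1), ∏ k, 1 / m k ^ (if k = d then s k - 1 else s k)
      = m d * ∏ k, 1 / m k ^ s k := by
    intro d
    rw [← Finset.mul_prod_erase Finset.univ _ (Finset.mem_univ d),
        ← Finset.mul_prod_erase Finset.univ (fun k => 1 / m k ^ s k) (Finset.mem_univ d)]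
    have h2 : ∏ k ∈ Finset.univ.erase d, 1 / m k ^ (if k = d then s k - 1 else s k)
        = ∏ k ∈ Finset.univ.erase d, 1 / m k ^ s k := by
      apply Finset.prod_congr rfl
      intro k hk
      rw [if_neg (Finset.mem_erase.mp hk).1]
    rw [h2, if_pos rfl, ← mul_assoc]
    congr 1
    have hmd := (hm d).ne'
    have hpow : m d ^ s d = m d ^ (s d - 1) * m d := by
      conv_lhs => rw [show s d = (s d - 1) + 1 by have := hs d; omega]
      rw [pow_succ]
    rw [hpow]
    field_simp
  calc ∏ k, 1 / m k ^ s k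
      = (∑ d, m d) * ((1 / (∑ k, m k)) * ∏ k, 1 / m k ^ s k) := by
        field_simp
    _ = ∑ d, (1 / (∑ k, m k)) * (m d * ∏ k, 1 / m k ^ s k) := by
        rw [Finset.sum_mul]
        apply Finset.sum_congr rfl
        intro d _; ring
    _ = _ := by
        apply Finset.sum_congr rfl
        intro d _
        rw [key d]

lemma indsum (w : ℕ) (s : Fin (w+1) → ℕ) (hs : ∀ k, 0 < s k) (m : Fin (w+1) → ℝ)
    (j : Fin (w+1)) :
    ∑ a ∈ Pset w s j, (if s j - 1 + ∑ k, a k = 0 then (1:ℝ) else 0) * plainTerm w s m j a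
      = if s j = 1 then plainTerm w s m j (fun _ => 0) else 0 := by
  have h0mem : (fun _ => 0 : Fin (w+1) → ℕ) ∈ Pset w s j := by
    rw [Pset, Fintype.mem_piFinset]
    intro k
    rw [Finset.mem_range]
    split_ifs
    · omega
    · exact hs k
  rw [Finset.sum_eq_single (fun _ => (0:ℕ))]
  · rcases eq_or_ne (s j) 1 with h1 | h1
    · rw [if_pos h1, if_pos (by simp only [Finset.sum_const_zero, add_zero]; omega), one_mul]
    · rw [if_neg h1, if_neg (by simp only [Finset.sum_const_zero, add_zero]; have := hs j; omega), zero_mul]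
  · intro b hb hbne
    rw [if_neg, zero_mul]
    intro hzero
    apply hbne
    funext k
    exact Finset.sum_eq_zero_iff.mp (Nat.eq_zero_of_add_eq_zero_left hzero) k (Finset.mem_univ k)
  · intro h; exact absurd h0mem h

lemma keyd_one (w : ℕ) (s : Fin (w+1) → ℕ) (hs : ∀ k, 0 < s k) (m : Fin (w+1) → ℝ)
    (hm : ∀ k, 0 < m k) (d : Fin (w+1)) (hd : s d = 1) :
    (1 / (∑ k, m k)) * ∏ k, 1 / m k ^ (if k = d then s k - 1 else s k)
      = (∑ j, ∑ a ∈ Pset w s j, ratio w s d j a * plainTerm w s m j a)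
        + (if s d = 1 then plainTerm w s m d (fun _ => 0) else 0) := by
  have hzero : (∑ j, ∑ a ∈ Pset w s j, ratio w s d j a * plainTerm w s m j a) = 0 := by
    apply Finset.sum_eq_zero
    intro j _
    apply Finset.sum_eq_zero
    intro a ha
    have hnum : (((s j - 1 + ∑ k, a k) - 1).factorial
        * (if d = j then s j - 1 else a d) : ℕ) = 0 := by
      rcases eq_or_ne d j with h | h
      · rw [if_pos h]; subst h; rw [hd]; ring
      · rw [if_neg h]
        have := (mem_Pset ha).2 d (h)
        have : a d = 0 := by omega
        rw [this]; ring
    rw [ratio, hnum, Nat.cast_zero, zero_div, zero_mul]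
  rw [hzero, zero_add, if_pos hd]
  have hprod : ∏ k, 1 / m k ^ (if k = d then s k - 1 else s k)
      = ∏ k ∈ Finset.univ.erase d, 1 / m k ^ (s k - 0) := by
    rw [← Finset.mul_prod_erase Finset.univ _ (Finset.mem_univ d), if_pos rfl, hd]
    simp only [Nat.sub_self, pow_zero, div_one, one_mul, Nat.sub_zero]
    apply Finset.prod_congr rfl
    intro k hk
    rw [if_neg (Finset.mem_erase.mp hk).1]
  rw [hprod, plainTerm]
  congr 1
  rw [Finset.sum_const, smul_zero, add_zero, hd, pow_one]

lemma keyd_two (w : ℕ) (s s' : Fin (w+1) → ℕ) (m : Fin (w+1) → ℝ)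
    (hm : ∀ k, 0 < m k) (d : Fin (w+1)) (hd : 2 ≤ s d)
    (hs'd : s' d = s d - 1) (hs'k : ∀ k, k ≠ d → s' k = s k)
    (IH : ∏ k, 1 / m k ^ s' k
      = ∑ j, ∑ a ∈ Pset w s' j, Mcoef w (s' j) a * plainTerm w s' m j a) :
    (1 / (∑ k, m k)) * ∏ k, 1 / m k ^ s' k
      = ∑ j, ∑ a ∈ Pset w s j, ratio w s d j a * plainTerm w s m j a := by
  have hn : (0:ℝ) < ∑ k, m k := Finset.sum_pos (fun k _ => hm k) Finset.univ_nonempty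
  rw [IH, Finset.mul_sum]
  apply Finset.sum_congr rfl
  intro j _
  rw [Finset.mul_sum]
  by_cases hjd : j = d
  · subst hjd
    have hPeq : Pset w s' j = Pset w s j := by
      unfold Pset
      congr 1
      funext k
      rcases eq_or_ne k j with h | h
      · rw [if_pos h, if_pos h]
      · rw [if_neg h, if_neg h, hs'k k h]
    rw [hPeq]
    apply Finset.sum_congr rfl
    intro a ha
    have hA : Mcoef w (s' j) a = ratio w s j j a := by
      unfold Mcoef ratio
      rw [if_pos rfl, hs'd]
      rw [show s j - 1 + ∑ k, a k - 1 = s j - 1 - 1 + ∑ k, a k by omega]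
      rw [show (s j - 1).factorial = (s j - 1) * (s j - 1 - 1).factorial from
        (Nat.mul_factorial_pred (by omega)).symm]
      push_cast
      have h1 : ((s j - 1 - 1).factorial : ℝ) ≠ 0 := Nat.cast_ne_zero.mpr (Nat.factorial_ne_zero _)
      have h2 : ((s j : ℝ) - 1) ≠ 0 := by
        have : (2:ℝ) ≤ (s j : ℝ) := by exact_mod_cast hd
        linarith
      have h3 : (∏ k, ((a k).factorial : ℝ)) ≠ 0 :=
        Finset.prod_ne_zero_iff.mpr (fun k _ => Nat.cast_ne_zero.mpr (Nat.factorial_ne_zero _))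
      field_simp
      ring
      exact (mul_inv_cancel₀ (Nat.cast_ne_zero.mpr (by omega))).symm
    have hB : (1 / (∑ k, m k)) * plainTerm w s' m j a = plainTerm w s m j a := by
      unfold plainTerm
      have hprod : ∏ k ∈ Finset.univ.erase j, 1 / m k ^ (s' k - a k)
          = ∏ k ∈ Finset.univ.erase j, 1 / m k ^ (s k - a k) := by
        apply Finset.prod_congr rfl
        intro k hk
        rw [hs'k k (Finset.mem_erase.mp hk).1]
      rw [hprod, hs'd, ← mul_assoc]
      congr 1
      rw [show s j + ∑ k, a k = (s j - 1 + ∑ k, a k) + 1 by omega, pow_succ]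
      rw [one_div, one_div, one_div, mul_inv]
      ring
    rw [← hA, ← hB]
    ring
  · have hdj : d ≠ j := fun h => hjd h.symm
    have hcond : ∀ a ∈ Pset w s j, ratio w s d j a * plainTerm w s m j a ≠ 0 → 0 < a d := by
      intro a _ hne
      by_contra hle
      apply hne
      have : a d = 0 := by omega
      rw [ratio, if_neg hdj, this]
      simp
    rw [← Finset.sum_filter_of_ne hcond]
    apply Finset.sum_nbij' (fun a' => fun k => a' k + (if k = d then 1 else 0))
      (fun a => fun k => a k - (if k = d then 1 else 0))
    · intro a' ha'
      rw [Pset, Fintype.mem_piFinset] at ha'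
      rw [Finset.mem_filter]
      constructor
      · rw [Pset, Fintype.mem_piFinset]
        intro k
        have hk := ha' k
        rw [Finset.mem_range] at *
        rcases eq_or_ne k d with h | h
        · subst h
          rw [if_pos rfl]
          rw [if_neg hdj] at hk ⊢
          rw [hs'd] at hk
          omega
        · rw [if_neg h]
          rcases eq_or_ne k j with h2 | h2
          · rw [if_pos h2] at hk ⊢; omega
          · rw [if_neg h2] at hk ⊢; rw [hs'k k h] at hk; omega
      · simp
    · intro a ha
      rw [Finset.mem_filter, Pset, Fintype.mem_piFinset] at ha
      obtain ⟨ha, had⟩ := ha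
      rw [Pset, Fintype.mem_piFinset]
      intro k
      have hk := ha k
      rw [Finset.mem_range] at *
      rcases eq_or_ne k d with h | h
      · subst h
        rw [if_pos rfl, if_neg hdj, hs'd]
        rw [if_neg hdj] at hk
        omega
      · rw [if_neg h]
        rcases eq_or_ne k j with h2 | h2
        · rw [if_pos h2] at hk ⊢; omega
        · rw [if_neg h2] at hk ⊢; rw [hs'k k h]; omega
    · intro a' _
      funext k
      show (a' k + (if k = d then 1 else 0)) - (if k = d then 1 else 0) = a' k
      split_ifs <;> omega
    · intro a ha
      rw [Finset.mem_filter] at ha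
      obtain ⟨-, had⟩ := ha
      funext k
      show (a k - (if k = d then 1 else 0)) + (if k = d then 1 else 0) = a k
      split_ifs with h
      · subst h; omega
      · omega
    · intro a' ha'
      rw [Pset, Fintype.mem_piFinset] at ha'
      set n := ∑ k, m k
      set S := ∑ k, a' k with hSdef
      have hS : ∑ k, (a' k + if k = d then 1 else 0) = S + 1 := by
        rw [Finset.sum_add_distrib, Finset.sum_ite_eq' Finset.univ d (fun _ => 1)]
        simp
        exact hSdef.symm
      have hfact : ∏ k, ((a' k + if k = d then 1 else 0).factorial : ℝ)
          = (a' d + 1) * ∏ k, ((a' k).factorial : ℝ) := by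
        rw [← Finset.mul_prod_erase Finset.univ
            (fun k => ((a' k + if k = d then 1 else 0).factorial : ℝ)) (Finset.mem_univ d),
          ← Finset.mul_prod_erase Finset.univ
            (fun k => ((a' k).factorial : ℝ)) (Finset.mem_univ d)]
        have : ∏ k ∈ Finset.univ.erase d, ((a' k + if k = d then 1 else 0).factorial : ℝ)
            = ∏ k ∈ Finset.univ.erase d, ((a' k).factorial : ℝ) := by
          apply Finset.prod_congr rfl
          intro k hk
          rw [if_neg (Finset.mem_erase.mp hk).1, add_zero]
        rw [this, if_pos rfl, Nat.factorial_succ]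
        push_cast
        ring
      have hA : ratio w s d j (fun k => a' k + if k = d then 1 else 0)
          = Mcoef w (s' j) a' := by
        unfold Mcoef ratio
        beta_reduce
        rw [hs'k j hjd, hS, if_neg hdj, if_pos rfl, hfact]
        rw [show s j - 1 + (S + 1) - 1 = s j - 1 + S by omega]
        push_cast
        have h3 : (∏ k, ((a' k).factorial : ℝ)) ≠ 0 :=
          Finset.prod_ne_zero_iff.mpr (fun k _ => Nat.cast_ne_zero.mpr (Nat.factorial_ne_zero _))
        have h4 : ((a' d : ℝ) + 1) ≠ 0 := by positivity
        have h5 : ((s j - 1).factorial : ℝ) ≠ 0 := Nat.cast_ne_zero.mpr (Nat.factorial_ne_zero _)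
        field_simp
        ring
      have hB : (1 / n) * plainTerm w s' m j a'
          = plainTerm w s m j (fun k => a' k + if k = d then 1 else 0) := by
        unfold plainTerm
        beta_reduce
        rw [hS, hs'k j hjd]
        have hprod : ∏ k ∈ Finset.univ.erase j, 1 / m k ^ (s' k - a' k)
            = ∏ k ∈ Finset.univ.erase j,
                1 / m k ^ (s k - (a' k + if k = d then 1 else 0)) := by
          apply Finset.prod_congr rfl
          intro k hk
          rcases eq_or_ne k d with h | h
          · subst h
            rw [if_pos rfl, hs'd,
              show s k - 1 - a' k = s k - (a' k + 1) by omega]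
          · rw [if_neg h, add_zero, hs'k k h]
        rw [← hprod, ← mul_assoc]
        congr 1
        rw [show s j + (S + 1) = (s j + S) + 1 by omega, pow_succ]
        rw [one_div, one_div, one_div, mul_inv]
        ring
      rw [← hA, ← hB]
      ring

lemma pf_main (w : ℕ) (N : ℕ) : ∀ (s : Fin (w+1) → ℕ), ∑ k, s k = N → (∀ k, 0 < s k) →
    ∀ (m : Fin (w+1) → ℝ), (∀ k, 0 < m k) →
    ∏ k, 1 / m k ^ s k = ∑ j, ∑ a ∈ Pset w s j, Mcoef w (s j) a * plainTerm w s m j a := by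
  induction N using Nat.strong_induction_on with
  | _ N IHN =>
  intro s hN hs m hm
  rw [step1 w s hs m hm]
  have keyd : ∀ d, (1 / (∑ k, m k)) * ∏ k, 1 / m k ^ (if k = d then s k - 1 else s k)
      = (∑ j, ∑ a ∈ Pset w s j, ratio w s d j a * plainTerm w s m j a)
        + (if s d = 1 then plainTerm w s m d (fun _ => 0) else 0) := by
    intro d
    by_cases h1 : s d = 1
    · exact keyd_one w s hs m hm d h1
    · have hd2 : 2 ≤ s d := by have := hs d; omega
      set s' : Fin (w+1) → ℕ := fun k => if k = d then s k - 1 else s k with hs'def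
      have hs'd : s' d = s d - 1 := by simp [hs'def]
      have hs'k : ∀ k, k ≠ d → s' k = s k := fun k h => by simp [hs'def, h]
      have hpos' : ∀ k, 0 < s' k := by
        intro k
        rcases eq_or_ne k d with h | h
        · rw [h, hs'd]; omega
        · rw [hs'k k h]; exact hs k
      have hsum' : ∑ k, s' k < N := by
        have e1 : ∑ k, s' k = s' d + ∑ k ∈ Finset.univ.erase d, s' k :=
          (Finset.add_sum_erase Finset.univ s' (Finset.mem_univ d)).symm
        have e2 : ∑ k, s k = s d + ∑ k ∈ Finset.univ.erase d, s k :=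
          (Finset.add_sum_erase Finset.univ s (Finset.mem_univ d)).symm
        have e3 : ∑ k ∈ Finset.univ.erase d, s' k = ∑ k ∈ Finset.univ.erase d, s k :=
          Finset.sum_congr rfl (fun k hk => hs'k k (Finset.mem_erase.mp hk).1)
        omega
      have IH := IHN (∑ k, s' k) hsum' s' rfl hpos' m hm
      rw [keyd_two w s s' m hm d hd2 hs'd hs'k IH, if_neg h1, add_zero]
  have expand : ∀ j, ∑ a ∈ Pset w s j, Mcoef w (s j) a * plainTerm w s m j a
      = (∑ a ∈ Pset w s j, (∑ d, ratio w s d j a) * plainTerm w s m j a)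
        + (if s j = 1 then plainTerm w s m j (fun _ => 0) else 0) := by
    intro j
    rw [← indsum w s hs m j, ← Finset.sum_add_distrib]
    apply Finset.sum_congr rfl
    intro a ha
    rw [coef_id w s hs j a ha, add_mul]
  calc ∑ d, (1 / (∑ k, m k)) * ∏ k, 1 / m k ^ (if k = d then s k - 1 else s k)
      = ∑ d, ((∑ j, ∑ a ∈ Pset w s j, ratio w s d j a * plainTerm w s m j a)
          + (if s d = 1 then plainTerm w s m d (fun _ => 0) else 0)) :=
        Finset.sum_congr rfl (fun d _ => keyd d)
    _ = (∑ d, ∑ j, ∑ a ∈ Pset w s j, ratio w s d j a * plainTerm w s m j a)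
          + ∑ d, (if s d = 1 then plainTerm w s m d (fun _ => 0) else 0) :=
        Finset.sum_add_distrib
    _ = (∑ j, ∑ a ∈ Pset w s j, (∑ d, ratio w s d j a) * plainTerm w s m j a)
          + ∑ d, (if s d = 1 then plainTerm w s m d (fun _ => 0) else 0) := by
        congr 1
        rw [Finset.sum_comm]
        apply Finset.sum_congr rfl
        intro j _
        rw [Finset.sum_comm]
        apply Finset.sum_congr rfl
        intro a _
        rw [Finset.sum_mul]
    _ = ∑ j, ((∑ a ∈ Pset w s j, (∑ d, ratio w s d j a) * plainTerm w s m j a)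
          + (if s j = 1 then plainTerm w s m j (fun _ => 0) else 0)) :=
        Finset.sum_add_distrib.symm
    _ = ∑ j, ∑ a ∈ Pset w s j, Mcoef w (s j) a * plainTerm w s m j a :=
        Finset.sum_congr rfl (fun j _ => (expand j).symm)

theorem pf (w : ℕ) (s : Fin (w+1) → ℕ) (hs : ∀ k, 0 < s k) (m : Fin (w+1) → ℝ)
    (hm : ∀ k, 0 < m k) :
    ∏ k, 1 / m k ^ s k = ∑ j, ∑ a ∈ Pset w s j, Mcoef w (s j) a * plainTerm w s m j a :=
  pf_main w (∑ k, s k) s rfl hs m hm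

noncomputable def Tlterm (r l : ℕ) (t : Fin r → ℕ)
    (m : {m : Fin r → ℕ // ∀ j, 0 < m j}) : ℝ :=
  ∏ k : Fin r,
    if (k : ℕ) < l then 1 / ((m.1 k : ℝ) ^ t k)
    else 1 / (((∑ j ∈ Finset.univ.filter (fun j : Fin r => j ≤ k), m.1 j : ℕ) : ℝ) ^ t k)

/-- The value `T_l(t_1, …, t_r)`. -/
noncomputable def Tl (r l : ℕ) (t : Fin r → ℕ) : ℝ :=
  ∑' m, Tlterm r l t m

/-- The argument list of `T_{l-1}` appearing in the reduction step (8) of the paper,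
for `l = e + 1`: the first `l - 1 = e` entries are `s_k - a_k` for `1 ≤ k ≤ l`, `k ≠ j`
(in order, realized via `Fin.succAbove`), the `l`-th entry is `s_j + A_j` where
`A_j = ∑_{k ≠ j} a_k`, and the remaining entries are `s_{l+1}, …, s_r` unchanged. -/
def newArgs (r e : ℕ) (hle : e + 2 ≤ r) (s' : Fin r → ℕ) (j : Fin (e + 1))
    (a : ∀ i : Fin e, Fin (s' (Fin.castLE (by omega) (j.succAbove i)))) :
    Fin r → ℕ := fun i =>
  if h : (i : ℕ) < e + 1 then
    (Fin.snoc (fun i' : Fin e => s' (Fin.castLE (by omega) (j.succAbove i')) - (a i' : ℕ))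
      (s' (Fin.castLE (by omega) j) + ∑ i' : Fin e, (a i' : ℕ)) : Fin (e + 1) → ℕ) ⟨(i : ℕ), h⟩
  else s' i

def sigmaPerm (e : ℕ) (j : Fin (e+1)) : Equiv.Perm (Fin (e+1)) :=
  (finSuccEquiv' (Fin.last e)).trans (finSuccEquiv' j).symm

lemma sigmaPerm_last (e : ℕ) (j : Fin (e+1)) : sigmaPerm e j (Fin.last e) = j := by
  rw [sigmaPerm, Equiv.trans_apply, finSuccEquiv'_at, finSuccEquiv'_symm_none]

lemma sigmaPerm_castSucc (e : ℕ) (j : Fin (e+1)) (i : Fin e) :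
    sigmaPerm e j (Fin.castSucc i) = j.succAbove i := by
  rw [sigmaPerm, Equiv.trans_apply, ← Fin.succAbove_last, finSuccEquiv'_succAbove,
    finSuccEquiv'_symm_some]

def lowEquiv (r e : ℕ) (hle : e + 2 ≤ r) : Fin (e+1) ≃ {k : Fin r // (k:ℕ) < e+1} where
  toFun i := ⟨Fin.castLE (by omega) i, i.isLt⟩
  invFun k := ⟨(k.1 : ℕ), k.2⟩
  left_inv i := rfl
  right_inv k := rfl

def bigPerm (r e : ℕ) (hle : e+2 ≤ r) (j : Fin (e+1)) : Equiv.Perm (Fin r) :=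
  (sigmaPerm e j).extendDomain (lowEquiv r e hle)

lemma bigPerm_low (r e : ℕ) (hle : e+2 ≤ r) (j : Fin (e+1)) (k : Fin (e+1)) :
    bigPerm r e hle j (Fin.castLE (by omega) k) = Fin.castLE (by omega) (sigmaPerm e j k) := by
  have h : ((Fin.castLE (by omega : e+1 ≤ r) k : Fin r) : ℕ) < e+1 := k.isLt
  have h2 := Equiv.Perm.extendDomain_apply_subtype (sigmaPerm e j) (lowEquiv r e hle)
    (b := Fin.castLE (by omega : e+1 ≤ r) k) h
  rw [bigPerm, h2]
  rfl

lemma bigPerm_high (r e : ℕ) (hle : e+2 ≤ r) (j : Fin (e+1)) (k : Fin r)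
    (h : ¬ (k:ℕ) < e+1) : bigPerm r e hle j k = k :=
  Equiv.Perm.extendDomain_apply_not_subtype _ _ h

lemma bigPerm_val_lt (r e : ℕ) (hle : e+2 ≤ r) (j : Fin (e+1)) (k : Fin r)
    (h : (k:ℕ) < e+1) : ((bigPerm r e hle j k : Fin r) : ℕ) < e + 1 := by
  have hk : k = Fin.castLE (by omega : e+1 ≤ r) (⟨(k:ℕ), h⟩ : Fin (e+1)) := rfl
  rw [hk, bigPerm_low]
  exact (sigmaPerm e j _).isLt

lemma psum_perm (r e : ℕ) (hle : e+2 ≤ r) (j : Fin (e+1)) (m : Fin r → ℕ)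
    (k : Fin r) (hk : e ≤ (k:ℕ)) :
    ∑ j' ∈ Finset.univ.filter (fun j' => j' ≤ k), m (bigPerm r e hle j j')
      = ∑ j' ∈ Finset.univ.filter (fun j' => j' ≤ k), m j' := by
  apply Finset.sum_equiv (bigPerm r e hle j)
  · intro i
    simp only [Finset.mem_filter, Finset.mem_univ, true_and]
    by_cases h : (i:ℕ) < e+1
    · constructor
      · intro _
        have := bigPerm_val_lt r e hle j i h
        rw [Fin.le_def]; omega
      · intro _
        rw [Fin.le_def]; omega
    · rw [bigPerm_high r e hle j i h]
  · intro i _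
    rfl

lemma newArgs_lt (r e : ℕ) (hle : e + 2 ≤ r) (s' : Fin r → ℕ) (j : Fin (e + 1))
    (a : ∀ i : Fin e, Fin (s' (Fin.castLE (by omega) (j.succAbove i))))
    (k : Fin r) (h : (k:ℕ) < e) :
    newArgs r e hle s' j a k
      = s' (Fin.castLE (by omega) (j.succAbove ⟨(k:ℕ), h⟩)) - (a ⟨(k:ℕ), h⟩ : ℕ) := by
  rw [newArgs, dif_pos (by omega : (k:ℕ) < e+1)]
  have h2 : (⟨(k:ℕ), by omega⟩ : Fin (e+1)) = Fin.castSucc ⟨(k:ℕ), h⟩ := rfl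
  rw [h2, Fin.snoc_castSucc]

lemma newArgs_eq (r e : ℕ) (hle : e + 2 ≤ r) (s' : Fin r → ℕ) (j : Fin (e + 1))
    (a : ∀ i : Fin e, Fin (s' (Fin.castLE (by omega) (j.succAbove i))))
    (k : Fin r) (h : (k:ℕ) = e) :
    newArgs r e hle s' j a k
      = s' (Fin.castLE (by omega) j) + ∑ i, (a i : ℕ) := by
  rw [newArgs, dif_pos (by omega : (k:ℕ) < e+1)]
  have h2 : (⟨(k:ℕ), by omega⟩ : Fin (e+1)) = Fin.last e := by
    apply Fin.ext; simpa using h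
  rw [h2, Fin.snoc_last]

lemma newArgs_gt (r e : ℕ) (hle : e + 2 ≤ r) (s' : Fin r → ℕ) (j : Fin (e + 1))
    (a : ∀ i : Fin e, Fin (s' (Fin.castLE (by omega) (j.succAbove i))))
    (k : Fin r) (h : ¬ (k:ℕ) < e + 1) :
    newArgs r e hle s' j a k = s' k := by
  rw [newArgs, dif_neg h]

def permEquiv (r e : ℕ) (hle : e+2 ≤ r) (j : Fin (e+1)) :
    {m : Fin r → ℕ // ∀ k, 0 < m k} ≃ {m : Fin r → ℕ // ∀ k, 0 < m k} where
  toFun m := ⟨fun k => m.1 (bigPerm r e hle j k), fun k => m.2 _⟩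
  invFun m := ⟨fun k => m.1 ((bigPerm r e hle j).symm k), fun k => m.2 _⟩
  left_inv m := Subtype.ext (funext fun k => by simp)
  right_inv m := Subtype.ext (funext fun k => by simp)

noncomputable def TailF (r e : ℕ) (s' : Fin r → ℕ) (m : Fin r → ℕ) : ℝ :=
  ∏ k ∈ Finset.univ.filter (fun k : Fin r => ¬ (k : ℕ) < e + 1),
    1 / (((∑ j' ∈ Finset.univ.filter (fun j' : Fin r => j' ≤ k), m j' : ℕ) : ℝ) ^ s' k)

lemma headTail (r e : ℕ) (hle : e + 2 ≤ r) (s' : Fin r → ℕ)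
    (m : {m : Fin r → ℕ // ∀ j, 0 < m j}) :
    Tlterm r (e+1) s' m
      = (∏ k : Fin (e+1), 1 / ((m.1 (Fin.castLE (by omega) k) : ℕ) : ℝ)
            ^ (s' (Fin.castLE (by omega) k)))
        * TailF r e s' m.1 := by
  rw [Tlterm, Finset.prod_ite, TailF]
  congr 1
  symm
  apply Finset.prod_bij (fun (k : Fin (e+1)) _ => (Fin.castLE (by omega : e+1 ≤ r) k : Fin r))
  · intro k _
    simp only [Finset.mem_filter, Finset.mem_univ, true_and]
    exact k.isLt
  · intro k1 _ k2 _ h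
    exact Fin.castLE_injective _ h
  · intro b hb
    simp only [Finset.mem_filter, Finset.mem_univ, true_and] at hb
    exact ⟨⟨(b:ℕ), hb⟩, Finset.mem_univ _, rfl⟩
  · intro k _
    rfl

lemma term_match (r e : ℕ) (hle : e + 2 ≤ r) (s' : Fin r → ℕ) (hs' : ∀ k, 0 < s' k)
    (j : Fin (e+1)) (a : ∀ i : Fin e, Fin (s' (Fin.castLE (by omega) (j.succAbove i))))
    (m : {m : Fin r → ℕ // ∀ j, 0 < m j}) :
    Tlterm r e (newArgs r e hle s' j a) (permEquiv r e hle j m)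
      = plainTerm e (fun k => s' (Fin.castLE (by omega) k))
          (fun k => ((m.1 (Fin.castLE (by omega) k) : ℕ) : ℝ)) j
          (j.insertNth 0 (fun i => (a i : ℕ)))
        * TailF r e s' m.1 := by
  have he : (e : ℕ) < r := by omega
  set sh : Fin (e+1) → ℕ := fun k => s' (Fin.castLE (by omega) k) with hshdef
  set msr : Fin (e+1) → ℝ := fun k => ((m.1 (Fin.castLE (by omega) k) : ℕ) : ℝ) with hmsrdef
  -- the key n value
  set nN : ℕ := ∑ j' ∈ Finset.univ.filter (fun j' : Fin r => j' ≤ (⟨e, he⟩ : Fin r)), m.1 j'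
    with hnNdef
  rw [Tlterm, Finset.prod_ite]
  have hA : (∏ k ∈ Finset.univ.filter (fun k : Fin r => (k : ℕ) < e),
        1 / (((permEquiv r e hle j m).1 k : ℕ) : ℝ) ^ (newArgs r e hle s' j a k))
      = ∏ i : Fin e, 1 / msr (j.succAbove i) ^ (sh (j.succAbove i) - (a i : ℕ)) := by
    symm
    apply Finset.prod_bij (fun (i : Fin e) _ => (Fin.castLE (by omega : e ≤ r) i : Fin r))
    · intro i _
      simp only [Finset.mem_filter, Finset.mem_univ, true_and]
      exact i.isLt
    · intro i1 _ i2 _ h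
      exact Fin.castLE_injective _ h
    · intro b hb
      simp only [Finset.mem_filter, Finset.mem_univ, true_and] at hb
      exact ⟨⟨(b:ℕ), hb⟩, Finset.mem_univ _, rfl⟩
    · intro i _
      have h1 : (Fin.castLE (by omega : e ≤ r) i : Fin r)
          = Fin.castLE (by omega : e+1 ≤ r) (Fin.castSucc i) := rfl
      have h2 : (permEquiv r e hle j m).1 (Fin.castLE (by omega : e ≤ r) i)
          = m.1 (Fin.castLE (by omega : e+1 ≤ r) (j.succAbove i)) := by
        show m.1 (bigPerm r e hle j _) = _
        rw [h1, bigPerm_low, sigmaPerm_castSucc]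
      have h3 : newArgs r e hle s' j a (Fin.castLE (by omega : e ≤ r) i)
          = sh (j.succAbove i) - (a i : ℕ) := by
        rw [newArgs_lt r e hle s' j a _ i.isLt]
        rfl
      rw [h2, h3]
  have hB : (∏ k ∈ Finset.univ.filter (fun k : Fin r => ¬ (k : ℕ) < e),
        1 / (((∑ j' ∈ Finset.univ.filter (fun j' : Fin r => j' ≤ k),
            (permEquiv r e hle j m).1 j' : ℕ) : ℝ) ^ (newArgs r e hle s' j a k)))
      = (1 / ((nN : ℕ) : ℝ) ^ (sh j + ∑ i, (a i : ℕ))) * TailF r e s' m.1 := by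
    have hsplit : Finset.univ.filter (fun k : Fin r => ¬ (k : ℕ) < e)
        = insert (⟨e, he⟩ : Fin r) (Finset.univ.filter (fun k : Fin r => ¬ (k : ℕ) < e + 1)) := by
      ext k
      simp only [Finset.mem_filter, Finset.mem_univ, true_and, Finset.mem_insert]
      constructor
      · intro h
        rcases Nat.eq_or_lt_of_le (Nat.le_of_not_lt h) with h1 | h1
        · left; apply Fin.ext; simp [h1.symm]
        · right; omega
      · intro h
        rcases h with h | h
        · subst h; simp
        · omega
    rw [hsplit, Finset.prod_insert (by simp)]
    congr 1
    · -- the factor at position e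
      have hps : ∑ j' ∈ Finset.univ.filter (fun j' : Fin r => j' ≤ (⟨e, he⟩ : Fin r)),
          (permEquiv r e hle j m).1 j' = nN := by
        rw [hnNdef]
        exact psum_perm r e hle j m.1 _ (by simp)
      rw [hps, newArgs_eq r e hle s' j a _ (by simp)]
    · -- the tail
      rw [TailF]
      apply Finset.prod_congr rfl
      intro k hk
      simp only [Finset.mem_filter, Finset.mem_univ, true_and] at hk
      have hps2 : (∑ j' ∈ Finset.univ.filter (fun j' : Fin r => j' ≤ k),
          (permEquiv r e hle j m).1 j') = ∑ j' ∈ Finset.univ.filter (fun j' : Fin r => j' ≤ k),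
          m.1 j' := psum_perm r e hle j m.1 k (by omega)
      rw [newArgs_gt r e hle s' j a k hk, hps2]
  rw [hA, hB]
  -- now handle plainTerm
  have hsum_ins : ∑ k, (j.insertNth 0 (fun i => ((a i : ℕ)))) k = ∑ i, (a i : ℕ) := by
    rw [Fin.sum_univ_succAbove _ j]
    simp
  have hn : ∑ k, msr k = ((nN : ℕ) : ℝ) := by
    rw [hnNdef, Nat.cast_sum]
    symm
    apply Finset.sum_bij (fun (k : Fin r) (hk : k ∈ Finset.univ.filter
        (fun j' : Fin r => j' ≤ (⟨e, he⟩ : Fin r))) =>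
      (⟨(k:ℕ), by simp only [Finset.mem_filter, Finset.mem_univ, true_and, Fin.le_def] at hk; omega⟩ : Fin (e+1)))
    · intro k _; exact Finset.mem_univ _
    · intro k1 hk1 k2 hk2 h
      exact Fin.ext (by simpa [Fin.mk.injEq] using h)
    · intro b _
      refine ⟨Fin.castLE (by omega : e+1 ≤ r) b, ?_, rfl⟩
      simp only [Finset.mem_filter, Finset.mem_univ, true_and, Fin.le_def]
      exact Nat.lt_succ_iff.mp b.isLt
    · intro k hk
      rfl
  have hprod_er : ∏ k ∈ Finset.univ.erase j,
      1 / msr k ^ (sh k - (Fin.insertNth (α := fun _ => ℕ) j 0 (fun i => ((a i : ℕ)))) k)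
      = ∏ i : Fin e, 1 / msr (j.succAbove i) ^ (sh (j.succAbove i) - (a i : ℕ)) := by
    symm
    apply Finset.prod_bij (fun (i : Fin e) _ => j.succAbove i)
    · intro i _
      exact Finset.mem_erase.mpr ⟨Fin.succAbove_ne j i, Finset.mem_univ _⟩
    · intro i1 _ i2 _ h
      exact Fin.succAbove_right_injective h
    · intro b hb
      obtain ⟨z, hz⟩ := Fin.exists_succAbove_eq (Finset.mem_erase.mp hb).1
      exact ⟨z, Finset.mem_univ _, hz⟩
    · intro i _
      rw [Fin.insertNth_apply_succAbove]
  rw [plainTerm, hsum_ins, hn, hprod_er]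
  ring

set_option maxHeartbeats 1000000 in
lemma coef_match (r e : ℕ) (hle : e + 2 ≤ r) (s' : Fin r → ℕ) (hs' : ∀ k, 0 < s' k)
    (j : Fin (e+1)) (a : ∀ i : Fin e, Fin (s' (Fin.castLE (by omega) (j.succAbove i)))) :
    Mcoef e (s' (Fin.castLE (by omega) j))
        (Fin.insertNth (α := fun _ => ℕ) j 0 (fun i => (a i : ℕ)))
      = ((Nat.factorial (s' (Fin.castLE (by omega) j) + (∑ i : Fin e, (a i : ℕ)) - 1) : ℝ) /
          ((Nat.factorial (s' (Fin.castLE (by omega) j) - 1) *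
            ∏ i : Fin e, Nat.factorial (a i) : ℕ) : ℝ)) := by
  rw [Mcoef]
  have hsum_ins : ∑ k, (Fin.insertNth (α := fun _ => ℕ) j 0 (fun i => ((a i : ℕ)))) k
      = ∑ i, (a i : ℕ) := by
    rw [Fin.sum_univ_succAbove _ j]
    simp
  have hprod_ins : ∏ k, (((Fin.insertNth (α := fun _ => ℕ) j 0
        (fun i => ((a i : ℕ)))) k).factorial : ℝ)
      = ∏ i, (((a i : ℕ)).factorial : ℝ) := by
    rw [Fin.prod_univ_succAbove _ j]
    simp
  rw [hsum_ins, hprod_ins,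
    show s' (Fin.castLE (by omega) j) - 1 + ∑ i, (a i : ℕ)
      = s' (Fin.castLE (by omega) j) + ∑ i, (a i : ℕ) - 1 from by have := hs' (Fin.castLE (by omega) j); omega]
  rw [Nat.cast_mul, Nat.cast_prod]

lemma pointwise (r e : ℕ) (hle : e + 2 ≤ r) (s' : Fin r → ℕ) (hs' : ∀ k, 0 < s' k)
    (m : {m : Fin r → ℕ // ∀ j, 0 < m j}) :
    Tlterm r (e+1) s' m
      = ∑ j : Fin (e + 1),
          ∑ a : (∀ i : Fin e, Fin (s' (Fin.castLE (by omega) (j.succAbove i)))),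
            ((Nat.factorial (s' (Fin.castLE (by omega) j) +
                (∑ i : Fin e, (a i : ℕ)) - 1) : ℝ) /
              ((Nat.factorial (s' (Fin.castLE (by omega) j) - 1) *
                ∏ i : Fin e, Nat.factorial (a i) : ℕ) : ℝ)) *
            Tlterm r e (newArgs r e hle s' j a) (permEquiv r e hle j m) := by
  have hmpos : ∀ k : Fin (e+1), (0:ℝ) < ((m.1 (Fin.castLE (by omega : e+1 ≤ r) k) : ℕ) : ℝ) :=
    fun k => by exact_mod_cast m.2 _
  have hpf := pf e (fun k => s' (Fin.castLE (by omega) k))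
    (fun k => hs' _) (fun k => ((m.1 (Fin.castLE (by omega) k) : ℕ) : ℝ)) hmpos
  rw [headTail r e hle s' m, hpf, Finset.sum_mul]
  apply Finset.sum_congr rfl
  intro j _
  rw [Finset.sum_mul]
  symm
  apply Finset.sum_nbij'
    (i := fun a : (∀ i : Fin e, Fin (s' (Fin.castLE (by omega) (j.succAbove i)))) =>
      Fin.insertNth (α := fun _ => ℕ) j 0 (fun i => (a i : ℕ)))
    (j := fun b => fun i : Fin e =>
      if h : b (j.succAbove i) < s' (Fin.castLE (by omega) (j.succAbove i))
      then (⟨b (j.succAbove i), h⟩ : Fin (s' (Fin.castLE (by omega) (j.succAbove i))))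
      else ⟨0, hs' _⟩)
  · intro a _
    rw [Pset, Fintype.mem_piFinset]
    intro k
    rw [Finset.mem_range]
    rcases eq_or_ne k j with h | h
    · subst h
      rw [if_pos rfl, Fin.insertNth_apply_same]
      omega
    · obtain ⟨z, hz⟩ := Fin.exists_succAbove_eq h
      rw [if_neg h, ← hz, Fin.insertNth_apply_succAbove]
      exact (a z).isLt
  · intro b _
    exact Finset.mem_univ _
  · intro a _
    funext i
    rw [Fin.insertNth_apply_succAbove]
    rw [dif_pos (a i).isLt]
  · intro b hb
    rw [Pset, Fintype.mem_piFinset] at hb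
    funext k
    rcases eq_or_ne k j with h | h
    · subst h
      rw [Fin.insertNth_apply_same]
      have := hb k
      rw [Finset.mem_range, if_pos rfl] at this
      omega
    · obtain ⟨z, hz⟩ := Fin.exists_succAbove_eq h
      have hlt : b (j.succAbove z) < s' (Fin.castLE (by omega) (j.succAbove z)) := by
        have := hb (j.succAbove z)
        rwa [Finset.mem_range, if_neg (by rw [hz]; exact h)] at this
      rw [← hz, Fin.insertNth_apply_succAbove]
      beta_reduce
      rw [dif_pos hlt]
  · intro a _
    rw [coef_match r e hle s' hs' j a, term_match r e hle s' hs' j a m]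
    ring

set_option maxHeartbeats 3000000 in
/-- **Step (8): reduction of `T_l` to `T_{l-1}`.**
For `1 ≤ l ≤ r - 1` (here `l = e + 1`, so `e + 2 ≤ r`) and positive integers
`s_1, …, s_r` such that all the relevant series converge absolutely,
`T_l(s_1, …, s_r) = ∑_{j=1}^{l} ∑_{(a_k)_{k≤l, k≠j}, 0 ≤ a_k ≤ s_k - 1}
   M_j · T_{l-1}(…, s_k - a_k, …, s_j + A_j, s_{l+1}, …, s_r)`,
where `A_j = ∑_{k≤l, k≠j} a_k` and
`M_j = (s_j + A_j - 1)!/((s_j - 1)! ∏_{k≤l, k≠j} a_k!)`. -/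
theorem tl_reduction (r e : ℕ) (hle : e + 2 ≤ r) (s' : Fin r → ℕ)
    (hs' : ∀ j, 0 < s' j)
    (hT : Summable (Tlterm r (e + 1) s'))
    (hT' : ∀ (j : Fin (e + 1))
      (a : ∀ i : Fin e, Fin (s' (Fin.castLE (by omega) (j.succAbove i)))),
      Summable (Tlterm r e (newArgs r e hle s' j a))) :
    Tl r (e + 1) s' =
      ∑ j : Fin (e + 1),
        ∑ a : (∀ i : Fin e, Fin (s' (Fin.castLE (by omega) (j.succAbove i)))),
          ((Nat.factorial (s' (Fin.castLE (by omega) j) +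
              (∑ i : Fin e, (a i : ℕ)) - 1) : ℝ) /
            ((Nat.factorial (s' (Fin.castLE (by omega) j) - 1) *
              ∏ i : Fin e, Nat.factorial (a i) : ℕ) : ℝ)) *
          Tl r e (newArgs r e hle s' j a) := by
  have hsum2 : ∀ (j : Fin (e+1))
      (a : ∀ i : Fin e, Fin (s' (Fin.castLE (by omega) (j.succAbove i)))),
      Summable (fun m => Tlterm r e (newArgs r e hle s' j a) (permEquiv r e hle j m)) :=
    fun j a => ((permEquiv r e hle j).summable_iff).mpr (hT' j a)
  rw [Tl, tsum_congr (pointwise r e hle s' hs'),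
    Summable.tsum_finsetSum (fun j _ => summable_sum (fun a _ => ((hsum2 j a).mul_left _)))]
  apply Finset.sum_congr rfl
  intro j _
  rw [Summable.tsum_finsetSum (fun a _ => (hsum2 j a).mul_left _)]
  apply Finset.sum_congr rfl
  intro a _
  rw [tsum_mul_left, Tl,
    (permEquiv r e hle j).tsum_eq (Tlterm r e (newArgs r e hle s' j a))]
end
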